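/- arXiv:1911.06691 — 4 statements merged into one kernel-verified Lean document; each statement's English description precedes it below -/
import Mathlib

section
/- Let Γ, α, ν, u₀, e₀ > 0, let c = (c₁,c₂) ∈ ℝ², let x* ∈ (0,1], and let (u,e) : [0,x*) → ℝ² be a solution of the profile ODE with u > 0 and e > 0 on [0,x*). Then u and e are bounded on [0,x*) by a constant depending only on Γ, α, ν, u₀, e₀, c₁, c₂ (in particular independent of x*), and the limits lim_{x→x*⁻} u(x) and lim_{x→x*⁻} e(x) exist, so that (u,e) extends to a continuous function on the closed interval [0,x*]. -/
open Set Filter Real Topology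


noncomputable section

/-- `(u, e)` solves the profile ODE
`u′ = (u₀/α)(c₁ + u + Γ e/u)`, `e′ = (u₀/ν)(c₂ − c₁ u − u²/2 + e)`
on the set `S`, with initial data `u 0 = u₀`, `e 0 = e₀`. -/
def IsProfileSol (Γ α ν u₀ e₀ : ℝ) (c : ℝ × ℝ) (u e : ℝ → ℝ) (S : Set ℝ) : Prop :=
  u 0 = u₀ ∧ e 0 = e₀ ∧
  ∀ x ∈ S,
    HasDerivWithinAt u ((u₀ / α) * (c.1 + u x + Γ * e x / u x)) S x ∧
    HasDerivWithinAt e ((u₀ / ν) * (c.2 - c.1 * u x - (u x) ^ 2 / 2 + e x)) S x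

/-- The feasible set 𝒞: the set of constants of integration `c` for which the solution of
the profile ODE is defined on `[0,1]` with `u > 0` and `e > 0` on `[0,1]`. -/
def Feasible (Γ α ν u₀ e₀ : ℝ) : Set (ℝ × ℝ) :=
  {c | ∃ u e : ℝ → ℝ,
    IsProfileSol Γ α ν u₀ e₀ c u e (Set.Icc 0 1) ∧
    ∀ x ∈ Set.Icc (0:ℝ) 1, 0 < u x ∧ 0 < e x}

lemma gronwallBound_mono' {δ K ε : ℝ} (hδ : 0 ≤ δ) (hK : 0 < K) (hε : 0 ≤ ε) {x y : ℝ}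
    (h : x ≤ y) : gronwallBound δ K ε x ≤ gronwallBound δ K ε y := by
  simp only [gronwallBound_of_K_ne_0 hK.ne']
  have h1 : Real.exp (K * x) ≤ Real.exp (K * y) :=
    Real.exp_le_exp.2 (mul_le_mul_of_nonneg_left h hK.le)
  have h2 : 0 ≤ ε / K := div_nonneg hε hK.le
  nlinarith

lemma gronwall_aux {xs : ℝ} {f f' : ℝ → ℝ} {δ K ε : ℝ}
    (hd : ∀ x ∈ Set.Ico 0 xs, HasDerivWithinAt f (f' x) (Set.Ico 0 xs) x)
    (h0 : f 0 ≤ δ)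
    (hb : ∀ x ∈ Set.Ico 0 xs, f' x ≤ K * f x + ε) :
    ∀ x ∈ Set.Ico 0 xs, f x ≤ gronwallBound δ K ε x := by
  intro b hbm
  have hsub : Set.Icc (0:ℝ) b ⊆ Set.Ico 0 xs := fun y hy => ⟨hy.1, lt_of_le_of_lt hy.2 hbm.2⟩
  have hsub' : Set.Ico (0:ℝ) b ⊆ Set.Ico 0 xs := fun y hy => ⟨hy.1, hy.2.trans hbm.2⟩
  have key := le_gronwallBound_of_liminf_deriv_right_le (f := f) (f' := f') (δ := δ) (K := K)
    (ε := ε) (a := 0) (b := b)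
    (fun y hy => ((hd y (hsub hy)).continuousWithinAt).mono hsub)
    (fun y hy r hr => by
      have hIci : HasDerivWithinAt f (f' y) (Set.Ici y) y := by
        refine (hd y (hsub' hy)).mono_of_mem_nhdsWithin ?_
        have h1 : Set.Ici y ∩ Set.Iio xs ∈ 𝓝[Set.Ici y] y :=
          inter_mem_nhdsWithin _ (Iio_mem_nhds ((hsub' hy).2))
        exact Filter.mem_of_superset h1 (fun z hz => ⟨le_trans (hsub' hy).1 hz.1, hz.2⟩)
      exact (hIci.liminf_right_slope_le hr).mono fun z hz => by
        simpa [slope_def_field, div_eq_inv_mul] using hz)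
    h0 (fun y hy => hb y (hsub' hy)) b (Set.right_mem_Icc.2 hbm.1)
  simpa using key

lemma extend_aux {xs : ℝ} (hxs : 0 < xs) {f f' : ℝ → ℝ} {L M : ℝ}
    (hd : ∀ x ∈ Set.Ico 0 xs, HasDerivWithinAt f (f' x) (Set.Ico 0 xs) x)
    (hlow : ∀ x ∈ Set.Ico 0 xs, -L ≤ f' x)
    (hub : ∀ x ∈ Set.Ico 0 xs, f x ≤ M) :
    ∃ F : ℝ → ℝ, ContinuousOn F (Set.Icc 0 xs) ∧ ∀ x ∈ Set.Ico 0 xs, F x = f x := by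
  set g : ℝ → ℝ := fun x => f x + L * x with hg
  have hgd : ∀ x ∈ Set.Ico 0 xs, HasDerivWithinAt g (f' x + L * 1) (Set.Ico 0 xs) x :=
    fun x hx => (hd x hx).add ((hasDerivWithinAt_id x _).const_mul L)
  have hgc : ContinuousOn g (Set.Ico 0 xs) := fun x hx => (hgd x hx).continuousWithinAt
  have hmono : MonotoneOn g (Set.Ico 0 xs) := by
    apply monotoneOn_of_hasDerivWithinAt_nonneg (f' := fun x => f' x + L * 1)
      (convex_Ico 0 xs) hgc
    · intro x hx
      rw [interior_Ico] at hx ⊢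
      exact (hgd x (Set.Ioo_subset_Ico_self hx)).mono Set.Ioo_subset_Ico_self
    · intro x hx
      rw [interior_Ico] at hx
      have := hlow x (Set.Ioo_subset_Ico_self hx)
      linarith
  have hbdd : BddAbove (g '' Set.Ioo 0 xs) := by
    refine ⟨M + |L| * xs, ?_⟩
    rintro _ ⟨x, hx, rfl⟩
    have h1 : f x ≤ M := hub x (Set.Ioo_subset_Ico_self hx)
    have h2 : L * x ≤ |L| * xs := le_trans
      (mul_le_mul_of_nonneg_right (le_abs_self L) hx.1.le)
      (mul_le_mul_of_nonneg_left hx.2.le (abs_nonneg L))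
    simpa [hg] using add_le_add h1 h2
  have hne : (Set.Ioo (0:ℝ) xs).Nonempty := Set.nonempty_Ioo.2 hxs
  have hgt : Tendsto g (𝓝[<] xs) (𝓝 (sSup (g '' Set.Ioo 0 xs))) :=
    MonotoneOn.tendsto_nhdsWithin_Ioo_left hne (hmono.mono Set.Ioo_subset_Ico_self) hbdd
  set ℓ : ℝ := sSup (g '' Set.Ioo 0 xs) - L * xs with hℓ
  have hft : Tendsto f (𝓝[<] xs) (𝓝 ℓ) := by
    have h2 : Tendsto (fun x => L * x) (𝓝[<] xs) (𝓝 (L * xs)) :=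
      ((continuous_const.mul continuous_id).tendsto xs).mono_left nhdsWithin_le_nhds
    have := hgt.sub h2
    simpa [hg] using this
  refine ⟨fun x => if x = xs then ℓ else f x, ?_, ?_⟩
  · intro x hx
    rcases eq_or_lt_of_le hx.2 with heq | hlt
    · subst heq
      rw [← continuousWithinAt_diff_self, Set.Icc_sdiff_right]
      have hUe : Tendsto f (𝓝[Set.Ico 0 x] x) (𝓝 ℓ) :=
        hft.mono_left (nhdsWithin_mono _ (fun y hy => hy.2))
      have : Tendsto (fun y => if y = x then ℓ else f y) (𝓝[Set.Ico 0 x] x) (𝓝 ℓ) := by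
        refine hUe.congr' ?_
        filter_upwards [self_mem_nhdsWithin] with y hy
        rw [if_neg hy.2.ne]
      simpa [ContinuousWithinAt] using this
    · have h1 : ContinuousWithinAt f (Set.Ico 0 xs) x :=
        (hd x ⟨hx.1, hlt⟩).continuousWithinAt
      have h2 : Set.Ico 0 xs ∈ 𝓝[Set.Icc 0 xs] x := by
        have h3 : Set.Icc 0 xs ∩ Set.Iio xs ∈ 𝓝[Set.Icc 0 xs] x :=
          inter_mem_nhdsWithin _ (Iio_mem_nhds hlt)
        exact Filter.mem_of_superset h3 (fun z hz => ⟨hz.1.1, hz.2⟩)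
      refine (h1.mono_of_mem_nhdsWithin h2).congr_of_eventuallyEq ?_ (if_neg hlt.ne)
      filter_upwards [h2] with y hy
      rw [if_neg hy.2.ne]
  · intro x hx
    exact if_neg hx.2.ne

set_option maxHeartbeats 1000000 in
/-- Lemma small(i): if `e > 0` on `[0, x*)` then `(u,e)` is bounded on `[0,x*)` uniformly in
`x* ∈ (0,1]`, and `(u,e)` extends continuously to the closed interval `[0,x*]`. -/
theorem stmt0 (Γ α ν u₀ e₀ : ℝ) (hΓ : 0 < Γ) (hα : 0 < α) (hν : 0 < ν)
    (hu₀ : 0 < u₀) (he₀ : 0 < e₀) (c : ℝ × ℝ) :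
    ∃ M : ℝ, ∀ xs : ℝ, xs ∈ Set.Ioc (0:ℝ) 1 →
      ∀ u e : ℝ → ℝ,
        IsProfileSol Γ α ν u₀ e₀ c u e (Set.Ico 0 xs) →
        (∀ x ∈ Set.Ico (0:ℝ) xs, 0 < u x ∧ 0 < e x) →
        (∀ x ∈ Set.Ico (0:ℝ) xs, |u x| ≤ M ∧ |e x| ≤ M) ∧
        ∃ U E : ℝ → ℝ, ContinuousOn U (Set.Icc 0 xs) ∧ ContinuousOn E (Set.Icc 0 xs) ∧
          ∀ x ∈ Set.Ico (0:ℝ) xs, U x = u x ∧ E x = e x := by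
  set A : ℝ := u₀ / α with hA
  set B : ℝ := u₀ / ν with hB
  have hApos : 0 < A := div_pos hu₀ hα
  have hBpos : 0 < B := div_pos hu₀ hν
  set εe : ℝ := B * (|c.2| + c.1 ^ 2 / 2) with hεe
  have hεe0 : 0 ≤ εe := by positivity
  set Me : ℝ := gronwallBound e₀ B εe 1 with hMe
  have hMepos : 0 < Me := by
    have := gronwallBound_mono' he₀.le hBpos hεe0 (zero_le_one (α := ℝ))
    rw [gronwallBound_x0] at this
    exact lt_of_lt_of_le he₀ this
  set εw : ℝ := A * (c.1 ^ 2 + 2 * Γ * Me) with hεw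
  have hεw0 : 0 ≤ εw := by positivity
  set Mw : ℝ := gronwallBound (u₀ ^ 2) (3 * A) εw 1 with hMw
  set M : ℝ := max (Real.sqrt Mw) Me with hM
  refine ⟨M, ?_⟩
  rintro xs ⟨hxs0, hxs1⟩ u e ⟨hu0, he0, hder⟩ hpos
  have hsub1 : ∀ x ∈ Set.Ico (0:ℝ) xs, x ≤ 1 := fun x hx => le_trans hx.2.le hxs1
  -- bound for e
  have heb : ∀ x ∈ Set.Ico (0:ℝ) xs, e x ≤ Me := by
    intro x hx
    have key := gronwall_aux (f := e)
      (f' := fun y => B * (c.2 - c.1 * u y - (u y) ^ 2 / 2 + e y))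
      (δ := e₀) (K := B) (ε := εe)
      (fun y hy => (hder y hy).2) (le_of_eq he0) ?_ x hx
    · exact le_trans key (gronwallBound_mono' he₀.le hBpos hεe0 (hsub1 x hx))
    · intro y hy
      have h1 : c.2 - c.1 * u y - (u y) ^ 2 / 2 ≤ |c.2| + c.1 ^ 2 / 2 := by
        nlinarith [sq_nonneg (u y + c.1), le_abs_self c.2]
      have h2 := mul_le_mul_of_nonneg_left h1 hBpos.le
      nlinarith
  -- bound for u via w = u^2
  have hub : ∀ x ∈ Set.Ico (0:ℝ) xs, u x ≤ Real.sqrt Mw := by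
    intro x hx
    have key := gronwall_aux (f := fun y => (u y) ^ 2)
      (f' := fun y => (2 : ℝ) * u y ^ 1 * (A * (c.1 + u y + Γ * e y / u y)))
      (δ := u₀ ^ 2) (K := 3 * A) (ε := εw)
      (fun y hy => ((hder y hy).1.pow 2).congr_deriv (by norm_num [hA]))
      (by simp [hu0]) ?_ x hx
    · refine Real.le_sqrt_of_sq_le ?_
      exact le_trans key (gronwallBound_mono' (by positivity) (by positivity) hεw0 (hsub1 x hx))
    · intro y hy
      obtain ⟨hup, hep⟩ := hpos y hy
      have hkey : (2 : ℝ) * u y ^ 1 * (A * (c.1 + u y + Γ * e y / u y)) =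
          2 * A * (c.1 * u y + u y ^ 2 + Γ * e y) := by
        field_simp
      show 2 * u y ^ 1 * (A * (c.1 + u y + Γ * e y / u y)) ≤ 3 * A * u y ^ 2 + εw
      rw [hkey]
      have t1 : 0 ≤ A * (c.1 ^ 2 + u y ^ 2 - 2 * c.1 * u y) :=
        mul_nonneg hApos.le (by nlinarith [sq_nonneg (u y - c.1)])
      have t2 : 0 ≤ 2 * A * Γ * (Me - e y) :=
        mul_nonneg (by positivity) (by linarith [heb y hy])
      nlinarith
  have hbound : ∀ x ∈ Set.Ico (0:ℝ) xs, |u x| ≤ M ∧ |e x| ≤ M := by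
    intro x hx
    obtain ⟨hup, hep⟩ := hpos x hx
    constructor
    · rw [abs_of_pos hup]
      exact le_trans (hub x hx) (le_max_left _ _)
    · rw [abs_of_pos hep]
      exact le_trans (heb x hx) (le_max_right _ _)
  have hM0 : 0 < M := lt_of_lt_of_le hMepos (le_max_right _ _)
  refine ⟨hbound, ?_⟩
  -- extend u
  obtain ⟨U, hUc, hUeq⟩ := extend_aux hxs0
    (f := u) (f' := fun y => A * (c.1 + u y + Γ * e y / u y)) (L := A * |c.1|) (M := M)
    (fun y hy => (hder y hy).1)
    (fun y hy => by
      obtain ⟨hup, hep⟩ := hpos y hy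
      have hdiv : 0 < Γ * e y / u y := div_pos (mul_pos hΓ hep) hup
      have : 0 ≤ A * (c.1 + |c.1| + u y + Γ * e y / u y) :=
        mul_nonneg hApos.le (by linarith [neg_abs_le c.1])
      nlinarith)
    (fun y hy => le_trans (le_abs_self _) (hbound y hy).1)
  -- extend e
  obtain ⟨E, hEc, hEeq⟩ := extend_aux hxs0
    (f := e) (f' := fun y => B * (c.2 - c.1 * u y - (u y) ^ 2 / 2 + e y))
    (L := B * (|c.2| + |c.1| * M + M ^ 2 / 2)) (M := M)
    (fun y hy => (hder y hy).2)
    (fun y hy => by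
      obtain ⟨hup, hep⟩ := hpos y hy
      have hum : u y ≤ M := le_trans (le_abs_self _) (hbound y hy).1
      have h1 : c.1 * u y ≤ |c.1| * M := le_trans
        (mul_le_mul_of_nonneg_right (le_abs_self c.1) hup.le)
        (mul_le_mul_of_nonneg_left hum (abs_nonneg c.1))
      have h2 : u y ^ 2 ≤ M ^ 2 := by nlinarith
      have hinner : -(|c.2| + |c.1| * M + M ^ 2 / 2) ≤
          c.2 - c.1 * u y - (u y) ^ 2 / 2 + e y := by
        have := neg_abs_le c.2
        linarith
      calc -(B * (|c.2| + |c.1| * M + M ^ 2 / 2))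
          = B * (-(|c.2| + |c.1| * M + M ^ 2 / 2)) := by ring
        _ ≤ B * (c.2 - c.1 * u y - (u y) ^ 2 / 2 + e y) :=
            mul_le_mul_of_nonneg_left hinner hBpos.le)
    (fun y hy => le_trans (le_abs_self _) (hbound y hy).2)
  exact ⟨U, E, hUc, hEc, fun x hx => ⟨hUeq x hx, hEeq x hx⟩⟩
end
end

section
/- Let Γ, α, ν, u₀, e₀ > 0, let c = (c₁,c₂) ∈ ℝ², let x* ∈ (0,1], and let (u,e) : [0,x*) → ℝ² be a solution of the profile ODE with u > 0 on [0,x*). If there exists a constant ẽ > 0 such that e(x) ≥ ẽ for all x ∈ [0,x*), then there exists a constant ũ > 0 such that u(x) > ũ for all x ∈ [0,x*). -/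
noncomputable section

/-- Lemma small(ii): if `e` is bounded below by a positive constant on `[0, x*)`,
then `u` is bounded below by a positive constant on `[0, x*)`. -/
theorem stmt1 (Γ α ν u₀ e₀ : ℝ) (hΓ : 0 < Γ) (hα : 0 < α) (hν : 0 < ν)
    (hu₀ : 0 < u₀) (he₀ : 0 < e₀) (c : ℝ × ℝ)
    (xs : ℝ) (hxs : xs ∈ Set.Ioc (0:ℝ) 1)
    (u e : ℝ → ℝ)
    (hsol : IsProfileSol Γ α ν u₀ e₀ c u e (Set.Ico 0 xs))
    (hupos : ∀ x ∈ Set.Ico (0:ℝ) xs, 0 < u x)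
    (et : ℝ) (het : 0 < et)
    (helow : ∀ x ∈ Set.Ico (0:ℝ) xs, et ≤ e x) :
    ∃ ut : ℝ, 0 < ut ∧ ∀ x ∈ Set.Ico (0:ℝ) xs, ut < u x := by
  set δ : ℝ := min (u₀ / 2) (Γ * et / (2 * (1 + |c.1|))) with hδdef
  have hc1 : (0:ℝ) < 1 + |c.1| := by positivity
  have hδpos : 0 < δ := lt_min (by linarith) (by positivity)
  have hδu₀ : δ < u₀ := lt_of_le_of_lt (min_le_left _ _) (by linarith)
  refine ⟨δ, hδpos, ?_⟩
  by_contra hcon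
  push_neg at hcon
  obtain ⟨x₀, hx₀mem, hx₀le⟩ := hcon
  -- the set of times where u ≤ δ
  set A : Set ℝ := {x | x ∈ Set.Ico (0:ℝ) xs ∧ u x ≤ δ} with hAdef
  have hAne : A.Nonempty := ⟨x₀, hx₀mem, hx₀le⟩
  have hAbdd : BddBelow A := ⟨0, fun x hx => hx.1.1⟩
  set x₁ : ℝ := sInf A with hx₁def
  have hx₁le : x₁ ≤ x₀ := csInf_le hAbdd ⟨hx₀mem, hx₀le⟩
  have hx₁nonneg : 0 ≤ x₁ := le_csInf hAne fun x hx => hx.1.1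
  have hx₁lt : x₁ < xs := lt_of_le_of_lt hx₁le hx₀mem.2
  have hx₁mem : x₁ ∈ Set.Ico (0:ℝ) xs := ⟨hx₁nonneg, hx₁lt⟩
  -- u x₁ ≤ δ by continuity
  have hcont : ContinuousWithinAt u (Set.Ico 0 xs) x₁ :=
    ((hsol.2.2 x₁ hx₁mem).1).continuousWithinAt
  have hx₁clos : x₁ ∈ closure A := csInf_mem_closure hAne hAbdd
  haveI hnbA : (nhdsWithin x₁ A).NeBot := mem_closure_iff_nhdsWithin_neBot.mp hx₁clos
  have htendA : Filter.Tendsto u (nhdsWithin x₁ A) (nhds (u x₁)) :=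
    hcont.tendsto.mono_left (nhdsWithin_mono _ fun x hx => hx.1)
  have hux₁le : u x₁ ≤ δ :=
    le_of_tendsto htendA (Filter.eventually_of_mem self_mem_nhdsWithin fun x hx => hx.2)
  -- hence x₁ > 0
  have hx₁pos : 0 < x₁ := by
    rcases lt_or_eq_of_le hx₁nonneg with h | h
    · exact h
    · exfalso; rw [← h] at hux₁le; rw [hsol.1] at hux₁le; linarith
  -- for x < x₁ in the domain, u x > δ
  have hleft : ∀ x ∈ Set.Ico (0:ℝ) x₁, δ < u x := by
    intro x hx
    by_contra h
    push_neg at h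
    have : x ∈ A := ⟨⟨hx.1, lt_trans hx.2 hx₁lt⟩, h⟩
    exact absurd (csInf_le hAbdd this) (not_le.mpr hx.2)
  -- the derivative at x₁
  have hux₁pos : 0 < u x₁ := hupos x₁ hx₁mem
  have hd := (hsol.2.2 x₁ hx₁mem).1
  set d : ℝ := (u₀ / α) * (c.1 + u x₁ + Γ * e x₁ / u x₁) with hddef
  -- d > 0 since u x₁ ≤ δ is small and e x₁ ≥ et
  have hdpos : 0 < d := by
    have h1 : Γ * et / δ ≤ Γ * et / u x₁ := by
      gcongr
    have h2 : Γ * et / u x₁ ≤ Γ * e x₁ / u x₁ := by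
      gcongr
      exact helow x₁ hx₁mem
    have h3 : 2 * (1 + |c.1|) ≤ Γ * et / δ := by
      rw [le_div_iff₀ hδpos]
      have hmin : δ ≤ Γ * et / (2 * (1 + |c.1|)) := min_le_right _ _
      have : δ * (2 * (1 + |c.1|)) ≤ (Γ * et / (2 * (1 + |c.1|))) * (2 * (1 + |c.1|)) := by
        apply mul_le_mul_of_nonneg_right hmin (by positivity)
      calc 2 * (1 + |c.1|) * δ = δ * (2 * (1 + |c.1|)) := by ring
        _ ≤ (Γ * et / (2 * (1 + |c.1|))) * (2 * (1 + |c.1|)) := this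
        _ = Γ * et := by field_simp
    have habs : -|c.1| ≤ c.1 := neg_abs_le c.1
    have hbig : 0 < c.1 + u x₁ + Γ * e x₁ / u x₁ := by
      have : 2 * (1 + |c.1|) ≤ Γ * e x₁ / u x₁ := le_trans h3 (le_trans h1 h2)
      linarith
    exact mul_pos (div_pos hu₀ hα) hbig
  -- but the left slopes at x₁ are nonpositive, so d ≤ 0
  have hd' : HasDerivWithinAt u d (Set.Ico 0 x₁) x₁ :=
    hd.mono (Set.Ico_subset_Ico le_rfl hx₁lt.le)
  rw [hasDerivWithinAt_iff_tendsto_slope] at hd'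
  have hdiff : Set.Ico (0:ℝ) x₁ \ {x₁} = Set.Ico 0 x₁ :=
    Set.diff_singleton_eq_self (fun h => lt_irrefl x₁ h.2)
  rw [hdiff] at hd'
  haveI : (nhdsWithin x₁ (Set.Ico 0 x₁)).NeBot := by
    apply mem_closure_iff_nhdsWithin_neBot.mp
    rw [closure_Ico (ne_of_lt hx₁pos)]
    exact ⟨hx₁nonneg, le_rfl⟩
  have hdle : d ≤ 0 := by
    apply le_of_tendsto hd'
    apply Filter.eventually_of_mem self_mem_nhdsWithin
    intro x hx
    rw [slope_def_field]
    apply div_nonpos_of_nonneg_of_nonpos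
    · have : δ < u x := hleft x hx
      linarith
    · linarith [hx.2]
  linarith
end
end

section
/- Let Γ, α, ν, u₀, e₀ > 0, let c = (c₁,c₂) ∈ ℝ², let x* ∈ (0,1], and let (u,e) : [0,x*) → ℝ² be a solution of the profile ODE with u > 0 and e > 0 on [0,x*). If u(x) → 0 and e(x) → 0 simultaneously as x → x*⁻, then c₁ < 0 and c₂ < 0. -/
noncomputable section

open Set Filter in
private lemma auxx (f f' : ℝ → ℝ) (a xs : ℝ) (h0a : 0 ≤ a) (haxs : a < xs)
    (hderiv : ∀ x ∈ Set.Ico a xs, HasDerivWithinAt f (f' x) (Set.Ico a xs) x)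
    (hpos : ∀ x ∈ Set.Ico a xs, 0 < f' x)
    (hfa : 0 < f a)
    (hlim : Filter.Tendsto f (nhdsWithin xs (Set.Ico 0 xs)) (nhds 0)) : False := by
  have hxs0 : 0 < xs := lt_of_le_of_lt h0a haxs
  have hcont : ContinuousOn f (Set.Ico a xs) := fun x hx => (hderiv x hx).continuousWithinAt
  have hmono : StrictMonoOn f (Set.Ico a xs) := by
    apply strictMonoOn_of_deriv_pos (convex_Ico a xs) hcont
    intro x hx
    rw [interior_Ico] at hx
    have hda : HasDerivAt f (f' x) x :=
      (hderiv x (Ioo_subset_Ico_self hx)).hasDerivAt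
        (mem_of_superset (isOpen_Ioo.mem_nhds hx) Ioo_subset_Ico_self)
    rw [hda.deriv]
    exact hpos x (Ioo_subset_Ico_self hx)
  haveI : (nhdsWithin xs (Set.Ico 0 xs)).NeBot := by
    rw [← mem_closure_iff_nhdsWithin_neBot, closure_Ico hxs0.ne]
    exact ⟨hxs0.le, le_refl xs⟩
  have h1 : ∀ᶠ x in nhdsWithin xs (Set.Ico 0 xs), f x < f a :=
    hlim (Iio_mem_nhds hfa)
  have h2 : ∀ᶠ x in nhdsWithin xs (Set.Ico 0 xs), a < x :=
    eventually_nhdsWithin_of_eventually_nhds (eventually_gt_nhds haxs)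
  have h3 : ∀ᶠ x in nhdsWithin xs (Set.Ico 0 xs), x ∈ Set.Ico 0 xs :=
    self_mem_nhdsWithin
  obtain ⟨x, hx1, hx2, hx3⟩ := (h1.and (h2.and h3)).exists
  have : f a < f x := hmono ⟨le_refl a, haxs⟩ ⟨hx2.le, hx3.2⟩ hx2
  linarith

/-- Lemma small(iii): if `(u, e) → 0` simultaneously as `x → x*⁻` with `u, e > 0`,
then `c₁ < 0` and `c₂ < 0`. -/
theorem stmt2 (Γ α ν u₀ e₀ : ℝ) (hΓ : 0 < Γ) (hα : 0 < α) (hν : 0 < ν)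
    (hu₀ : 0 < u₀) (he₀ : 0 < e₀) (c : ℝ × ℝ)
    (xs : ℝ) (hxs : xs ∈ Set.Ioc (0:ℝ) 1)
    (u e : ℝ → ℝ)
    (hsol : IsProfileSol Γ α ν u₀ e₀ c u e (Set.Ico 0 xs))
    (hpos : ∀ x ∈ Set.Ico (0:ℝ) xs, 0 < u x ∧ 0 < e x)
    (hulim : Filter.Tendsto u (nhdsWithin xs (Set.Ico 0 xs)) (nhds 0))
    (helim : Filter.Tendsto e (nhdsWithin xs (Set.Ico 0 xs)) (nhds 0)) :
    c.1 < 0 ∧ c.2 < 0 := by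
  obtain ⟨hxs0, hxs1⟩ := hxs
  obtain ⟨hu0, he0, hd⟩ := hsol
  have hc1 : c.1 < 0 := by
    by_contra h1
    push_neg at h1
    refine auxx u (fun x => (u₀ / α) * (c.1 + u x + Γ * e x / u x)) 0 xs le_rfl hxs0
      (fun x hx => (hd x hx).1) ?_ (by rw [hu0]; exact hu₀) hulim
    intro x hx
    obtain ⟨hux, hex⟩ := hpos x hx
    have h2 : 0 < Γ * e x / u x := by positivity
    have h3 : 0 < u₀ / α := by positivity
    nlinarith
  refine ⟨hc1, ?_⟩
  by_contra h2
  push_neg at h2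
  have hev : ∀ᶠ x in nhdsWithin xs (Set.Ico 0 xs), u x < -c.1 :=
    hulim (Iio_mem_nhds (by linarith))
  rw [eventually_nhdsWithin_iff, Metric.eventually_nhds_iff] at hev
  obtain ⟨ε, hε, hball⟩ := hev
  set a : ℝ := max 0 (xs - ε / 2) with ha
  have h0a : 0 ≤ a := le_max_left _ _
  have haxs : a < xs := max_lt hxs0 (by linarith)
  have hsub : Set.Ico a xs ⊆ Set.Ico 0 xs := Set.Ico_subset_Ico h0a le_rfl
  have hsmall : ∀ x ∈ Set.Ico a xs, u x < -c.1 := by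
    intro x hx
    apply hball _ (hsub hx)
    have hax : xs - ε / 2 ≤ x := le_trans (le_max_right _ _) hx.1
    rw [Real.dist_eq, abs_lt]
    constructor <;> [linarith [hx.2]; linarith [hx.1, hx.2]]
  refine auxx e (fun x => (u₀ / ν) * (c.2 - c.1 * u x - (u x) ^ 2 / 2 + e x)) a xs h0a haxs
    (fun x hx => ((hd x (hsub hx)).2).mono hsub) ?_ (hpos a (hsub ⟨le_rfl, haxs⟩)).2 helim
  intro x hx
  obtain ⟨hux, hex⟩ := hpos x (hsub hx)
  have h3 : 0 < u₀ / ν := by positivity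
  have h4 := hsmall x hx
  nlinarith [mul_lt_mul_of_pos_left h4 hux]
end
end

section
/- Let Γ, α, ν, u₀, e₀ > 0 and let c = (c₁,c₂) ∈ ℝ² with c₁ < 0 and c₂ < 0. For every ε > 0 there exists δ > 0, depending only on c₁, c₂, ε (and Γ, α, ν, u₀), with the following property: if x* > 0 and (u,e) is a solution of the profile ODE on [0,x*] with u > 0 and e > 0 on [0,x*], and if u(x*) ≤ δ and e(x*) ≤ δ, then there exists x̃ ∈ [x*, x* + ε] such that (u,e) extends to a solution of the profile ODE on [0, x̃) with u > 0 and e > 0 on [0, x̃), and e(x) → 0 as x → x̃⁻. -/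
noncomputable section

open Set Filter Topology NNReal

set_option maxHeartbeats 1000000


lemma slope_left_nonneg {f : ℝ → ℝ} {s : Set ℝ} {x d a : ℝ}
    (hf : HasDerivWithinAt f d s x) (ha : a < x) (hsub : Set.Ioo a x ⊆ s)
    (hlt : ∀ y ∈ Set.Ioo a x, f y < f x) : 0 ≤ d := by
  by_contra hd
  push_neg at hd
  have hts : Filter.Tendsto (slope f x) (nhdsWithin x (s \ {x})) (nhds d) :=
    hasDerivWithinAt_iff_tendsto_slope.1 hf
  have hsub' : Set.Ioo a x ⊆ s \ {x} := fun y hy => ⟨hsub hy, by exact ne_of_lt hy.2⟩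
  have hmono : nhdsWithin x (Set.Ioo a x) ≤ nhdsWithin x (s \ {x}) := nhdsWithin_mono x hsub'
  have hne : (nhdsWithin x (Set.Ioo a x)).NeBot := by
    apply mem_closure_iff_nhdsWithin_neBot.mp
    rw [closure_Ioo (ne_of_lt ha)]
    exact ⟨le_of_lt ha, le_refl x⟩
  have hev : ∀ᶠ y in nhdsWithin x (Set.Ioo a x), slope f x y < 0 :=
    (hts.mono_left hmono).eventually_lt_const hd
  have hev2 : ∀ᶠ y in nhdsWithin x (Set.Ioo a x), (0:ℝ) < slope f x y := by
    filter_upwards [self_mem_nhdsWithin] with y hy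
    have h1 : f y < f x := hlt y hy
    have h2 : y < x := hy.2
    rw [slope_def_field]
    exact div_pos_iff.mpr (Or.inr ⟨by linarith, by linarith⟩)
  obtain ⟨y, hy1, hy2⟩ := (hev.and hev2).exists
  linarith

lemma slope_left_nonpos {f : ℝ → ℝ} {s : Set ℝ} {x d a : ℝ}
    (hf : HasDerivWithinAt f d s x) (ha : a < x) (hsub : Set.Ioo a x ⊆ s)
    (hlt : ∀ y ∈ Set.Ioo a x, f x < f y) : d ≤ 0 := by
  have := slope_left_nonneg (f := fun z => -f z) (d := -d) hf.neg ha hsub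
    (fun y hy => by simpa using hlt y hy)
  linarith

/-- The planar vector field of the profile ODE. -/
noncomputable def Fvec (Γ α ν u₀ : ℝ) (c : ℝ × ℝ) : ℝ × ℝ → ℝ × ℝ := fun p =>
  ((u₀ / α) * (c.1 + p.1 + Γ * p.2 / p.1), (u₀ / ν) * (c.2 - c.1 * p.1 - p.1 ^ 2 / 2 + p.2))

/-- A compact region avoiding `u = 0`. -/
def Reg (m B : ℝ) : Set (ℝ × ℝ) := {p | m ≤ p.1 ∧ p.1 ≤ B ∧ |p.2| ≤ B}

lemma F_lip (Γ α ν u₀ : ℝ) (c : ℝ × ℝ) {m B : ℝ} (hΓ : 0 < Γ) (hm : 0 < m) (hB : 0 < B) :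
    ∃ K : ℝ≥0, LipschitzOnWith K (Fvec Γ α ν u₀ c) (Reg m B) := by
  set Kr : ℝ := (|u₀ / α| * (1 + Γ * (2 * B) / m ^ 2)) + (|u₀ / ν| * (|c.1| + B + 1)) with hKr
  have e1 : (0:ℝ) ≤ |u₀ / α| := abs_nonneg _
  have e2 : (0:ℝ) ≤ |u₀ / ν| := abs_nonneg _
  have e3 : (0:ℝ) ≤ Γ * (2 * B) / m ^ 2 := by positivity
  have e4 : (0:ℝ) ≤ |c.1| := abs_nonneg _
  have eA : (0:ℝ) ≤ |u₀ / α| * (1 + Γ * (2 * B) / m ^ 2) := by positivity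
  have eB : (0:ℝ) ≤ |u₀ / ν| * (|c.1| + B + 1) := by positivity
  have hKr0 : 0 ≤ Kr := by rw [hKr]; positivity
  refine ⟨Real.toNNReal Kr, lipschitzOnWith_iff_dist_le_mul.2 ?_⟩
  intro p hp q hq
  obtain ⟨hp1, hp2, hp3⟩ := hp
  obtain ⟨hq1, hq2, hq3⟩ := hq
  have hp1' : 0 < p.1 := lt_of_lt_of_le hm hp1
  have hq1' : 0 < q.1 := lt_of_lt_of_le hm hq1
  set d := dist p q with hd
  have hd0 : 0 ≤ d := dist_nonneg
  have hd1 : |p.1 - q.1| ≤ d := by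
    rw [hd, Prod.dist_eq]
    exact le_trans (le_of_eq (Real.dist_eq p.1 q.1).symm) (le_max_left _ _)
  have hd2 : |p.2 - q.2| ≤ d := by
    rw [hd, Prod.dist_eq]
    exact le_trans (le_of_eq (Real.dist_eq p.2 q.2).symm) (le_max_right _ _)
  have key1 : |p.2 / p.1 - q.2 / q.1| ≤ 2 * B * d / m ^ 2 := by
    have heq : p.2 / p.1 - q.2 / q.1 = (p.2 * (q.1 - p.1) + p.1 * (p.2 - q.2)) / (p.1 * q.1) := by
      field_simp; ring
    rw [heq, abs_div, abs_of_pos (show (0:ℝ) < p.1 * q.1 by positivity)]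
    have hden2 : m ^ 2 ≤ p.1 * q.1 := by nlinarith
    have hnum : |p.2 * (q.1 - p.1) + p.1 * (p.2 - q.2)| ≤ 2 * B * d := by
      have h1 : |p.2 * (q.1 - p.1)| ≤ B * d := by
        rw [abs_mul]
        have h' : |q.1 - p.1| = |p.1 - q.1| := abs_sub_comm _ _
        nlinarith [abs_nonneg p.2, abs_nonneg (q.1 - p.1)]
      have h2 : |p.1 * (p.2 - q.2)| ≤ B * d := by
        rw [abs_mul]
        have hb : |p.1| ≤ B := by rw [abs_of_pos hp1']; exact hp2
        nlinarith [abs_nonneg (p.2 - q.2)]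
      calc |p.2 * (q.1 - p.1) + p.1 * (p.2 - q.2)|
          ≤ |p.2 * (q.1 - p.1)| + |p.1 * (p.2 - q.2)| := abs_add_le _ _
        _ ≤ 2 * B * d := by linarith
    exact div_le_div₀ (by positivity) hnum (by positivity) hden2
  have key2 : |(Fvec Γ α ν u₀ c p).1 - (Fvec Γ α ν u₀ c q).1|
      ≤ |u₀ / α| * (1 + Γ * (2 * B) / m ^ 2) * d := by
    have h0 : (Fvec Γ α ν u₀ c p).1 - (Fvec Γ α ν u₀ c q).1
        = (u₀ / α) * ((p.1 - q.1) + Γ * (p.2 / p.1 - q.2 / q.1)) := by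
      simp only [Fvec]; ring
    rw [h0, abs_mul]
    have h5 : |(p.1 - q.1) + Γ * (p.2 / p.1 - q.2 / q.1)| ≤ (1 + Γ * (2 * B) / m ^ 2) * d := by
      have t1 : |(p.1 - q.1) + Γ * (p.2 / p.1 - q.2 / q.1)|
          ≤ |p.1 - q.1| + Γ * |p.2 / p.1 - q.2 / q.1| := by
        refine le_trans (abs_add_le _ _) ?_
        rw [abs_mul, abs_of_pos hΓ]
      have t2 : Γ * |p.2 / p.1 - q.2 / q.1| ≤ Γ * (2 * B * d / m ^ 2) :=
        mul_le_mul_of_nonneg_left key1 hΓ.le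
      have t3 : (1 + Γ * (2 * B) / m ^ 2) * d = d + Γ * (2 * B * d / m ^ 2) := by
        field_simp
      linarith
    calc |u₀ / α| * |(p.1 - q.1) + Γ * (p.2 / p.1 - q.2 / q.1)|
        ≤ |u₀ / α| * ((1 + Γ * (2 * B) / m ^ 2) * d) := mul_le_mul_of_nonneg_left h5 e1
      _ = |u₀ / α| * (1 + Γ * (2 * B) / m ^ 2) * d := by ring
  have key3 : |(Fvec Γ α ν u₀ c p).2 - (Fvec Γ α ν u₀ c q).2|
      ≤ |u₀ / ν| * (|c.1| + B + 1) * d := by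
    have h6 : (Fvec Γ α ν u₀ c p).2 - (Fvec Γ α ν u₀ c q).2
        = (u₀ / ν) * ((-c.1) * (p.1 - q.1) - (p.1 + q.1) / 2 * (p.1 - q.1) + (p.2 - q.2)) := by
      simp only [Fvec]; ring
    rw [h6, abs_mul]
    set X := (-c.1) * (p.1 - q.1) with hX
    set Y := (p.1 + q.1) / 2 * (p.1 - q.1) with hY
    set Z := p.2 - q.2 with hZ
    have i1 : |X| ≤ |c.1| * d := by
      rw [hX, abs_mul, abs_neg]
      exact mul_le_mul_of_nonneg_left hd1 e4
    have i2 : |Y| ≤ B * d := by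
      rw [hY, abs_mul]
      have hb : |(p.1 + q.1) / 2| ≤ B := by
        rw [abs_of_pos (by positivity)]; linarith
      nlinarith [abs_nonneg (p.1 - q.1)]
    have i3 : |X - Y + Z| ≤ |X| + |Y| + |Z| := by
      calc |X - Y + Z| ≤ |X - Y| + |Z| := abs_add_le _ _
        _ ≤ |X| + |Y| + |Z| := by have := abs_sub X Y; linarith
    have h7 : |X - Y + Z| ≤ (|c.1| + B + 1) * d := by
      have : (|c.1| + B + 1) * d = |c.1| * d + B * d + d := by ring
      linarith
    calc |u₀ / ν| * |X - Y + Z|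
        ≤ |u₀ / ν| * ((|c.1| + B + 1) * d) := mul_le_mul_of_nonneg_left h7 e2
      _ = |u₀ / ν| * (|c.1| + B + 1) * d := by ring
  rw [Prod.dist_eq, Real.coe_toNNReal _ hKr0, Real.dist_eq, Real.dist_eq]
  have hKd : Kr * d = |u₀ / α| * (1 + Γ * (2 * B) / m ^ 2) * d
      + |u₀ / ν| * (|c.1| + B + 1) * d := by rw [hKr]; ring
  have mA : 0 ≤ |u₀ / α| * (1 + Γ * (2 * B) / m ^ 2) * d := by positivity
  have mB : 0 ≤ |u₀ / ν| * (|c.1| + B + 1) * d := by positivity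
  apply max_le
  · calc |(Fvec Γ α ν u₀ c p).1 - (Fvec Γ α ν u₀ c q).1|
        ≤ |u₀ / α| * (1 + Γ * (2 * B) / m ^ 2) * d := key2
      _ ≤ Kr * d := by rw [hKr, add_mul]; linarith
  · calc |(Fvec Γ α ν u₀ c p).2 - (Fvec Γ α ν u₀ c q).2|
        ≤ |u₀ / ν| * (|c.1| + B + 1) * d := key3
      _ ≤ Kr * d := by rw [hKr, add_mul]; linarith

lemma F_bdd (Γ α ν u₀ : ℝ) (c : ℝ × ℝ) {m B : ℝ} (hΓ : 0 < Γ) (hm : 0 < m) (hB : 0 < B) :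
    ∃ C : ℝ, 0 < C ∧ ∀ p ∈ Reg m B, ‖Fvec Γ α ν u₀ c p‖ ≤ C := by
  refine ⟨(|u₀ / α| * (|c.1| + B + Γ * B / m)) + (|u₀ / ν| * (|c.2| + |c.1| * B + B ^ 2 / 2 + B)) + 1,
    ?_, ?_⟩
  · positivity
  intro p hp
  obtain ⟨hp1, hp2, hp3⟩ := hp
  have hp1' : 0 < p.1 := lt_of_lt_of_le hm hp1
  have hb1 : |p.1| ≤ B := by rw [abs_of_pos hp1']; exact hp2
  rw [Prod.norm_def]
  have c1 : ‖(Fvec Γ α ν u₀ c p).1‖ ≤ |u₀ / α| * (|c.1| + B + Γ * B / m) := by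
    simp only [Fvec, Real.norm_eq_abs, abs_mul]
    apply mul_le_mul_of_nonneg_left _ (abs_nonneg _)
    have t1 : |Γ * p.2 / p.1| ≤ Γ * B / m := by
      rw [abs_div, abs_of_pos hp1', abs_mul, abs_of_pos hΓ]
      apply div_le_div₀ (by positivity) (mul_le_mul_of_nonneg_left hp3 hΓ.le) hm hp1
    calc |c.1 + p.1 + Γ * p.2 / p.1| ≤ |c.1 + p.1| + |Γ * p.2 / p.1| := abs_add_le _ _
      _ ≤ (|c.1| + |p.1|) + |Γ * p.2 / p.1| := by have := abs_add_le c.1 p.1; linarith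
      _ ≤ |c.1| + B + Γ * B / m := by linarith
  have c2 : ‖(Fvec Γ α ν u₀ c p).2‖ ≤ |u₀ / ν| * (|c.2| + |c.1| * B + B ^ 2 / 2 + B) := by
    simp only [Fvec, Real.norm_eq_abs, abs_mul]
    apply mul_le_mul_of_nonneg_left _ (abs_nonneg _)
    have t2 : |c.1 * p.1| ≤ |c.1| * B := by
      rw [abs_mul]; exact mul_le_mul_of_nonneg_left hb1 (abs_nonneg _)
    have t3 : |p.1 ^ 2 / 2| ≤ B ^ 2 / 2 := by
      rw [abs_of_nonneg (by positivity : (0:ℝ) ≤ p.1 ^ 2 / 2)]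
      nlinarith
    calc |c.2 - c.1 * p.1 - p.1 ^ 2 / 2 + p.2|
        ≤ |c.2 - c.1 * p.1 - p.1 ^ 2 / 2| + |p.2| := abs_add_le _ _
      _ ≤ (|c.2 - c.1 * p.1| + |p.1 ^ 2 / 2|) + |p.2| := by
          have := abs_sub (c.2 - c.1 * p.1) (p.1 ^ 2 / 2); linarith
      _ ≤ (|c.2| + |c.1 * p.1| + |p.1 ^ 2 / 2|) + |p.2| := by
          have := abs_sub c.2 (c.1 * p.1); linarith
      _ ≤ |c.2| + |c.1| * B + B ^ 2 / 2 + B := by linarith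
  have n1 : (0:ℝ) ≤ |u₀ / ν| * (|c.2| + |c.1| * B + B ^ 2 / 2 + B) := by positivity
  have n2 : (0:ℝ) ≤ |u₀ / α| * (|c.1| + B + Γ * B / m) := by positivity
  apply max_le <;> linarith

/-- A positive solution of the profile ODE on `[0, y]`. -/
def GoodSol (Γ α ν u₀ e₀ : ℝ) (c : ℝ × ℝ) (y : ℝ) (p : (ℝ → ℝ) × (ℝ → ℝ)) : Prop :=
  IsProfileSol Γ α ν u₀ e₀ c p.1 p.2 (Set.Icc 0 y) ∧
    ∀ x ∈ Set.Icc (0:ℝ) y, 0 < p.1 x ∧ 0 < p.2 x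

variable {Γ α ν u₀ e₀ : ℝ} {c : ℝ × ℝ} {y y' : ℝ} {p q : (ℝ → ℝ) × (ℝ → ℝ)}

lemma GoodSol.cont1 (h : GoodSol Γ α ν u₀ e₀ c y p) : ContinuousOn p.1 (Set.Icc 0 y) :=
  fun x hx => ((h.1.2.2 x hx).1).continuousWithinAt

lemma GoodSol.cont2 (h : GoodSol Γ α ν u₀ e₀ c y p) : ContinuousOn p.2 (Set.Icc 0 y) :=
  fun x hx => ((h.1.2.2 x hx).2).continuousWithinAt

lemma GoodSol.vec (h : GoodSol Γ α ν u₀ e₀ c y p) :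
    ∀ x ∈ Set.Icc (0:ℝ) y, HasDerivWithinAt (fun t => (p.1 t, p.2 t))
      (Fvec Γ α ν u₀ c (p.1 x, p.2 x)) (Set.Icc 0 y) x := by
  intro x hx
  exact HasDerivWithinAt.prodMk (h.1.2.2 x hx).1 (h.1.2.2 x hx).2

lemma GoodSol.contvec (h : GoodSol Γ α ν u₀ e₀ c y p) :
    ContinuousOn (fun t => (p.1 t, p.2 t)) (Set.Icc 0 y) :=
  fun x hx => ((h.vec x hx).continuousWithinAt)

lemma GoodSol.mono (h : GoodSol Γ α ν u₀ e₀ c y p) (h0 : 0 ≤ y') (hy : y' ≤ y) :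
    GoodSol Γ α ν u₀ e₀ c y' p := by
  refine ⟨⟨h.1.1, h.1.2.1, fun x hx => ?_⟩, fun x hx => h.2 x ⟨hx.1, le_trans hx.2 hy⟩⟩
  have hx' : x ∈ Set.Icc (0:ℝ) y := ⟨hx.1, le_trans hx.2 hy⟩
  exact ⟨(h.1.2.2 x hx').1.mono (Set.Icc_subset_Icc_right hy),
    (h.1.2.2 x hx').2.mono (Set.Icc_subset_Icc_right hy)⟩

/-- Uniqueness of positive solutions. -/
lemma GoodSol.unique (hΓ : 0 < Γ) (hy : 0 ≤ y)
    (h1 : GoodSol Γ α ν u₀ e₀ c y p) (h2 : GoodSol Γ α ν u₀ e₀ c y q) :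
    ∀ x ∈ Set.Icc (0:ℝ) y, p.1 x = q.1 x ∧ p.2 x = q.2 x := by
  set g1 : ℝ → ℝ × ℝ := fun t => (p.1 t, p.2 t) with hg1
  set g2 : ℝ → ℝ × ℝ := fun t => (q.1 t, q.2 t) with hg2
  have hcpt : IsCompact (Set.Icc (0:ℝ) y) := isCompact_Icc
  have hne : (Set.Icc (0:ℝ) y).Nonempty := Set.nonempty_Icc.2 hy
  -- lower bound for first coordinates
  obtain ⟨x₁, hx₁, hmin1⟩ := hcpt.exists_isMinOn hne h1.cont1
  obtain ⟨x₂, hx₂, hmin2⟩ := hcpt.exists_isMinOn hne h2.cont1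
  set m : ℝ := min (p.1 x₁) (q.1 x₂) with hm
  have hm0 : 0 < m := lt_min (h1.2 x₁ hx₁).1 (h2.2 x₂ hx₂).1
  obtain ⟨C1, hC1⟩ := hcpt.exists_bound_of_continuousOn h1.contvec
  obtain ⟨C2, hC2⟩ := hcpt.exists_bound_of_continuousOn h2.contvec
  set B : ℝ := max C1 C2 with hB
  have hB0 : 0 < B := lt_of_lt_of_le ((h1.2 x₁ hx₁).1.trans_le (le_abs_self _))
    (le_trans (le_trans (le_max_left _ _) (le_of_eq (Prod.norm_def (g1 x₁)).symm))
      (le_trans (hC1 x₁ hx₁) (le_max_left _ _)))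
  have hmem1 : ∀ t ∈ Set.Icc (0:ℝ) y, g1 t ∈ Reg m B := by
    intro t ht
    refine ⟨le_trans (min_le_left _ _) (hmin1 ht), ?_, ?_⟩
    · exact le_trans (le_trans (le_abs_self _) (le_trans (le_max_left _ _)
        (le_of_eq (Prod.norm_def (g1 t)).symm))) (le_trans (hC1 t ht) (le_max_left _ _))
    · exact le_trans (le_trans (le_max_right _ _) (le_of_eq (Prod.norm_def (g1 t)).symm))
        (le_trans (hC1 t ht) (le_max_left _ _))
  have hmem2 : ∀ t ∈ Set.Icc (0:ℝ) y, g2 t ∈ Reg m B := by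
    intro t ht
    refine ⟨le_trans (min_le_right _ _) (hmin2 ht), ?_, ?_⟩
    · exact le_trans (le_trans (le_abs_self _) (le_trans (le_max_left _ _)
        (le_of_eq (Prod.norm_def (g2 t)).symm))) (le_trans (hC2 t ht) (le_max_right _ _))
    · exact le_trans (le_trans (le_max_right _ _) (le_of_eq (Prod.norm_def (g2 t)).symm))
        (le_trans (hC2 t ht) (le_max_right _ _))
  obtain ⟨K, hK⟩ := F_lip Γ α ν u₀ c hΓ hm0 hB0
  have hder : ∀ (g : ℝ → ℝ × ℝ), (∀ x ∈ Set.Icc (0:ℝ) y, HasDerivWithinAt g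
      (Fvec Γ α ν u₀ c (g x)) (Set.Icc 0 y) x) →
      ∀ t ∈ Set.Ico (0:ℝ) y, HasDerivWithinAt g (Fvec Γ α ν u₀ c (g t)) (Set.Ici t) t := by
    intro g hg t ht
    have h' := (hg t ⟨ht.1, le_of_lt ht.2⟩).mono (Set.Icc_subset_Icc_left ht.1)
    refine h'.mono_of_mem_nhdsWithin ?_
    rw [mem_nhdsWithin]
    exact ⟨Set.Iio y, isOpen_Iio, ht.2, fun z hz => ⟨hz.2, le_of_lt hz.1⟩⟩
  have heq : Set.EqOn g1 g2 (Set.Icc 0 y) := by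
    apply ODE_solution_unique_of_mem_Icc_right (fun _ _ => hK)
      h1.contvec (hder g1 h1.vec) (fun t ht => hmem1 t (Set.Ico_subset_Icc_self ht))
      h2.contvec (hder g2 h2.vec) (fun t ht => hmem2 t (Set.Ico_subset_Icc_self ht))
    show (p.1 0, p.2 0) = (q.1 0, q.2 0)
    rw [h1.1.1, h1.1.2.1, h2.1.1, h2.1.2.1]
  intro x hx
  have := heq hx
  rw [hg1, hg2] at this
  exact ⟨congrArg Prod.fst this, congrArg Prod.snd this⟩

variable {xs : ℝ}

lemma GoodSol.cont1' (h : GoodSol Γ α ν u₀ e₀ c y p) : ContinuousOn p.1 (Set.Icc 0 y) :=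
  fun x hx => ((h.1.2.2 x hx).1).continuousWithinAt
lemma GoodSol.cont2' (h : GoodSol Γ α ν u₀ e₀ c y p) : ContinuousOn p.2 (Set.Icc 0 y) :=
  fun x hx => ((h.1.2.2 x hx).2).continuousWithinAt

lemma nebot_Ioo {a x₁ : ℝ} (ha : a < x₁) : (nhdsWithin x₁ (Set.Ioo a x₁)).NeBot := by
  apply mem_closure_iff_nhdsWithin_neBot.mp
  rw [closure_Ioo (ne_of_lt ha)]
  exact ⟨le_of_lt ha, le_refl x₁⟩

lemma left_lim_le {f : ℝ → ℝ} {s : Set ℝ} {a x₁ M : ℝ} (ha : a < x₁) (hsub : Set.Ioo a x₁ ⊆ s)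
    (hc : ContinuousWithinAt f s x₁) (h : ∀ z ∈ Set.Ioo a x₁, f z < M) : f x₁ ≤ M := by
  haveI := nebot_Ioo ha
  exact le_of_tendsto (hc.mono hsub)
    (by filter_upwards [self_mem_nhdsWithin] with z hz using (h z hz).le)

lemma left_lim_ge {f : ℝ → ℝ} {s : Set ℝ} {a x₁ M : ℝ} (ha : a < x₁) (hsub : Set.Ioo a x₁ ⊆ s)
    (hc : ContinuousWithinAt f s x₁) (h : ∀ z ∈ Set.Ioo a x₁, M < f z) : M ≤ f x₁ := by
  haveI := nebot_Ioo ha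
  exact ge_of_tendsto (hc.mono hsub)
    (by filter_upwards [self_mem_nhdsWithin] with z hz using (h z hz).le)

/-- Invariant regions: if the solution starts (at `xs`) strictly below the barriers `M`, `δ'`,
it stays strictly below them. -/
lemma inv1 (hΓ : 0 < Γ) (hα : 0 < u₀ / α) (hν : 0 < u₀ / ν) (hc1 : c.1 < 0)
    {M δ' : ℝ} (hM : 0 < M) (hδ' : 0 < δ')
    (hMc : c.1 + M + Γ * δ' / M < 0) (hec : c.2 + (-c.1) * M + δ' < 0)
    (hsol : GoodSol Γ α ν u₀ e₀ c y p) (hxs : xs ∈ Set.Icc (0:ℝ) y)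
    (hu : p.1 xs < M) (he : p.2 xs < δ') :
    ∀ x ∈ Set.Icc xs y, p.1 x < M ∧ p.2 x < δ' := by
  by_contra hcon
  push_neg at hcon
  set S' : Set ℝ := (Set.Icc xs y ∩ p.1 ⁻¹' Set.Ici M) ∪ (Set.Icc xs y ∩ p.2 ⁻¹' Set.Ici δ')
    with hS'
  have hsub0 : Set.Icc xs y ⊆ Set.Icc 0 y := Set.Icc_subset_Icc_left hxs.1
  have hclosed : IsClosed S' := by
    apply IsClosed.union
    · exact ContinuousOn.preimage_isClosed_of_isClosed (hsol.cont1'.mono hsub0)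
        isClosed_Icc isClosed_Ici
    · exact ContinuousOn.preimage_isClosed_of_isClosed (hsol.cont2'.mono hsub0)
        isClosed_Icc isClosed_Ici
  have hSne : S'.Nonempty := by
    obtain ⟨x, hx, hx2⟩ := hcon
    by_cases hcase : p.1 x < M
    · exact ⟨x, Or.inr ⟨hx, hx2 hcase⟩⟩
    · exact ⟨x, Or.inl ⟨hx, not_lt.1 hcase⟩⟩
  have hbdd : BddBelow S' := by
    apply BddBelow.mono _ (bddBelow_Icc (a := y) (b := xs))
    intro x hx
    rcases hx with h | h <;> exact h.1
  set x₁ : ℝ := sInf S' with hx₁def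
  have hx₁S : x₁ ∈ S' := hclosed.csInf_mem hSne hbdd
  have hx₁Icc : x₁ ∈ Set.Icc xs y := by rcases hx₁S with h | h <;> exact h.1
  have hx₁ne : x₁ ≠ xs := by
    intro hh
    rcases hx₁S with h | h
    · rw [hh] at h; exact absurd h.2 (not_le.2 hu)
    · rw [hh] at h; exact absurd h.2 (not_le.2 he)
  have hx₁gt : xs < x₁ := lt_of_le_of_ne hx₁Icc.1 (Ne.symm hx₁ne)
  have hbefore : ∀ z ∈ Set.Ioo xs x₁, p.1 z < M ∧ p.2 z < δ' := by
    intro z hz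
    have hznot : z ∉ S' := fun hmem => absurd (csInf_le hbdd hmem) (not_le.2 hz.2)
    have hzIcc : z ∈ Set.Icc xs y := ⟨hz.1.le, hz.2.le.trans hx₁Icc.2⟩
    constructor
    · by_contra hh; exact hznot (Or.inl ⟨hzIcc, not_lt.1 hh⟩)
    · by_contra hh; exact hznot (Or.inr ⟨hzIcc, not_lt.1 hh⟩)
  have hsubIoo : Set.Ioo xs x₁ ⊆ Set.Icc 0 y :=
    fun z hz => ⟨le_trans hxs.1 hz.1.le, hz.2.le.trans hx₁Icc.2⟩
  have hx₁Icc0 : x₁ ∈ Set.Icc (0:ℝ) y := hsub0 hx₁Icc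
  have hule : p.1 x₁ ≤ M := left_lim_le hx₁gt hsubIoo
    (hsol.cont1' x₁ hx₁Icc0) (fun z hz => (hbefore z hz).1)
  have hele : p.2 x₁ ≤ δ' := left_lim_le hx₁gt hsubIoo
    (hsol.cont2' x₁ hx₁Icc0) (fun z hz => (hbefore z hz).2)
  have hupos : 0 < p.1 x₁ := (hsol.2 x₁ hx₁Icc0).1
  have hepos : 0 < p.2 x₁ := (hsol.2 x₁ hx₁Icc0).2
  rcases hx₁S with h | h
  · -- u hits M
    have huM : p.1 x₁ = M := le_antisymm hule h.2
    have hder := (hsol.1.2.2 x₁ hx₁Icc0).1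
    have hdneg : (u₀ / α) * (c.1 + p.1 x₁ + Γ * p.2 x₁ / p.1 x₁) < 0 := by
      apply mul_neg_of_pos_of_neg hα
      rw [huM]
      have : Γ * p.2 x₁ / M ≤ Γ * δ' / M :=
        div_le_div₀ (by positivity) (mul_le_mul_of_nonneg_left hele hΓ.le) hM le_rfl
      linarith
    have := slope_left_nonneg hder hx₁gt hsubIoo
      (fun z hz => by rw [huM]; exact (hbefore z hz).1)
    linarith
  · -- e hits δ'
    have heδ : p.2 x₁ = δ' := le_antisymm hele h.2
    have hder := (hsol.1.2.2 x₁ hx₁Icc0).2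
    have hdneg : (u₀ / ν) * (c.2 - c.1 * p.1 x₁ - (p.1 x₁) ^ 2 / 2 + p.2 x₁) < 0 := by
      apply mul_neg_of_pos_of_neg hν
      have h1 : -c.1 * p.1 x₁ ≤ (-c.1) * M := mul_le_mul_of_nonneg_left hule (by linarith)
      have h2 : 0 ≤ (p.1 x₁) ^ 2 / 2 := by positivity
      rw [heδ]; linarith
    have := slope_left_nonneg hder hx₁gt hsubIoo
      (fun z hz => by rw [heδ]; exact (hbefore z hz).2)
    linarith

lemma GoodSol.cont1'' (h : GoodSol Γ α ν u₀ e₀ c y p) : ContinuousOn p.1 (Set.Icc 0 y) :=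
  fun x hx => ((h.1.2.2 x hx).1).continuousWithinAt
lemma GoodSol.cont2'' (h : GoodSol Γ α ν u₀ e₀ c y p) : ContinuousOn p.2 (Set.Icc 0 y) :=
  fun x hx => ((h.1.2.2 x hx).2).continuousWithinAt

/-- Quantitative decay of `e`: under the region bounds, `e` decreases at rate at least `a2*R0`. -/
lemma inv2 (hν : 0 < u₀ / ν) (hc1 : c.1 < 0)
    {M δ' R0 : ℝ} (hR0 : 0 < R0)
    (hec : c.2 + (-c.1) * M + δ' ≤ -R0)
    (hsol : GoodSol Γ α ν u₀ e₀ c y p) (hxs : xs ∈ Set.Icc (0:ℝ) y) (h0 : 0 < xs)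
    (hbnd : ∀ x ∈ Set.Icc xs y, p.1 x ≤ M ∧ p.2 x ≤ δ') :
    ∀ x₁ ∈ Set.Icc xs y, ∀ x₂ ∈ Set.Icc xs y, x₁ ≤ x₂ →
      p.2 x₂ ≤ p.2 x₁ - (u₀ / ν * R0) * (x₂ - x₁) := by
  have hsub0 : Set.Icc xs y ⊆ Set.Icc 0 y := Set.Icc_subset_Icc_left hxs.1
  have key : AntitoneOn (fun x => p.2 x + (u₀ / ν * R0) * x) (Set.Icc xs y) := by
    apply antitoneOn_of_deriv_nonpos (convex_Icc xs y)
    · exact (hsol.cont2''.mono hsub0).add (continuousOn_const.mul continuousOn_id)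
    · intro x hx
      rw [interior_Icc] at hx
      have hxI : x ∈ Set.Icc (0:ℝ) y := ⟨le_trans h0.le hx.1.le, hx.2.le⟩
      have hmem : Set.Icc (0:ℝ) y ∈ nhds x :=
        Icc_mem_nhds (lt_of_lt_of_le h0 hx.1.le) hx.2
      have hd : HasDerivAt p.2 ((u₀ / ν) * (c.2 - c.1 * p.1 x - (p.1 x) ^ 2 / 2 + p.2 x)) x :=
        ((hsol.1.2.2 x hxI).2).hasDerivAt hmem
      exact (hd.add ((hasDerivAt_id x).const_mul (u₀ / ν * R0))).differentiableAt.differentiableWithinAt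
    · intro x hx
      rw [interior_Icc] at hx
      have hxI : x ∈ Set.Icc (0:ℝ) y := ⟨le_trans h0.le hx.1.le, hx.2.le⟩
      have hmem : Set.Icc (0:ℝ) y ∈ nhds x :=
        Icc_mem_nhds (lt_of_lt_of_le h0 hx.1.le) hx.2
      have hd : HasDerivAt p.2 ((u₀ / ν) * (c.2 - c.1 * p.1 x - (p.1 x) ^ 2 / 2 + p.2 x)) x :=
        ((hsol.1.2.2 x hxI).2).hasDerivAt hmem
      have hd2 : HasDerivAt (fun x => p.2 x + (u₀ / ν * R0) * x)
          ((u₀ / ν) * (c.2 - c.1 * p.1 x - (p.1 x) ^ 2 / 2 + p.2 x) + (u₀ / ν * R0) * 1) x :=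
        hd.add ((hasDerivAt_id x).const_mul (u₀ / ν * R0))
      rw [hd2.deriv]
      have hb := hbnd x ⟨hx.1.le, hx.2.le⟩
      have hup : 0 < p.1 x := (hsol.2 x hxI).1
      have h1 : -c.1 * p.1 x ≤ (-c.1) * M := mul_le_mul_of_nonneg_left hb.1 (by linarith)
      have h2 : (0:ℝ) ≤ (p.1 x) ^ 2 / 2 := by positivity
      have h3 : c.2 - c.1 * p.1 x - (p.1 x) ^ 2 / 2 + p.2 x ≤ -R0 := by linarith [hb.2]
      have h4 : (u₀ / ν) * (c.2 - c.1 * p.1 x - (p.1 x) ^ 2 / 2 + p.2 x) ≤ (u₀ / ν) * (-R0) :=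
        mul_le_mul_of_nonneg_left h3 hν.le
      have : (u₀ / ν) * (-R0) + (u₀ / ν * R0) * 1 = 0 := by ring
      linarith
  intro x₁ hx₁ x₂ hx₂ h12
  have := key hx₁ hx₂ h12
  simp only at this
  linarith

/-- Lower barrier for `u`: if `e ≥ L` on `[xs, y]`, then
`u > min (u xs) (Γ L / (2 * (-c.1))) / 2` there. -/
lemma inv3 (hΓ : 0 < Γ) (hα : 0 < u₀ / α) (hc1 : c.1 < 0)
    {L : ℝ} (hL0 : 0 < L)
    (hsol : GoodSol Γ α ν u₀ e₀ c y p) (hxs : xs ∈ Set.Icc (0:ℝ) y)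
    (hLe : ∀ x ∈ Set.Icc xs y, L ≤ p.2 x) :
    ∀ x ∈ Set.Icc xs y, min (p.1 xs) (Γ * L / (2 * (-c.1))) / 2 < p.1 x := by
  set m' : ℝ := min (p.1 xs) (Γ * L / (2 * (-c.1))) / 2 with hm'
  have hsub0 : Set.Icc xs y ⊆ Set.Icc 0 y := Set.Icc_subset_Icc_left hxs.1
  have huxs : 0 < p.1 xs := (hsol.2 xs hxs).1
  have hθ : 0 < Γ * L / (2 * (-c.1)) := div_pos (by positivity) (by linarith)
  have hm'0 : 0 < m' := by rw [hm']; have := lt_min huxs hθ; linarith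
  have hstart : m' < p.1 xs := by
    rw [hm']
    have := min_le_left (p.1 xs) (Γ * L / (2 * (-c.1)))
    linarith
  by_contra hcon
  push_neg at hcon
  obtain ⟨xb, hxb, hxb2⟩ := hcon
  set S' : Set ℝ := Set.Icc xs y ∩ p.1 ⁻¹' Set.Iic m' with hS'
  have hclosed : IsClosed S' :=
    ContinuousOn.preimage_isClosed_of_isClosed (hsol.cont1''.mono hsub0) isClosed_Icc isClosed_Iic
  have hSne : S'.Nonempty := ⟨xb, hxb, hxb2⟩
  have hbdd : BddBelow S' := BddBelow.mono (fun x hx => hx.1) (bddBelow_Icc (a := y) (b := xs))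
  set x₁ : ℝ := sInf S' with hx₁def
  have hx₁S : x₁ ∈ S' := hclosed.csInf_mem hSne hbdd
  have hx₁Icc : x₁ ∈ Set.Icc xs y := hx₁S.1
  have hx₁gt : xs < x₁ := by
    rcases lt_or_eq_of_le hx₁Icc.1 with h | h
    · exact h
    · exfalso; rw [← h] at hx₁S; exact absurd hx₁S.2 (not_le.2 hstart)
  have hbefore : ∀ z ∈ Set.Ioo xs x₁, m' < p.1 z := by
    intro z hz
    have hznot : z ∉ S' := fun hmem => absurd (csInf_le hbdd hmem) (not_le.2 hz.2)
    have hzIcc : z ∈ Set.Icc xs y := ⟨hz.1.le, hz.2.le.trans hx₁Icc.2⟩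
    by_contra hh
    exact hznot ⟨hzIcc, not_lt.1 hh⟩
  have hsubIoo : Set.Ioo xs x₁ ⊆ Set.Icc 0 y :=
    fun z hz => ⟨le_trans hxs.1 hz.1.le, hz.2.le.trans hx₁Icc.2⟩
  have hx₁Icc0 : x₁ ∈ Set.Icc (0:ℝ) y := hsub0 hx₁Icc
  have hum : p.1 x₁ = m' := by
    refine le_antisymm hx₁S.2 ?_
    exact left_lim_ge hx₁gt hsubIoo (hsol.cont1'' x₁ hx₁Icc0) hbefore
  have hder := (hsol.1.2.2 x₁ hx₁Icc0).1
  have hdpos : 0 < (u₀ / α) * (c.1 + p.1 x₁ + Γ * p.2 x₁ / p.1 x₁) := by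
    apply mul_pos hα
    have hm'θ : m' ≤ Γ * L / (2 * (-c.1)) / 2 := by
      rw [hm']
      have := min_le_right (p.1 xs) (Γ * L / (2 * (-c.1)))
      linarith
    have hfrac : 4 * (-c.1) ≤ Γ * L / m' := by
      rw [le_div_iff₀ hm'0]
      calc 4 * (-c.1) * m' ≤ 4 * (-c.1) * (Γ * L / (2 * (-c.1)) / 2) :=
            mul_le_mul_of_nonneg_left hm'θ (by linarith)
        _ = (Γ * L / (2 * (-c.1))) * (2 * (-c.1)) := by ring
        _ = Γ * L := div_mul_cancel₀ _ (by linarith : (2:ℝ) * (-c.1) ≠ 0)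
    have hex : 0 < p.2 x₁ := (hsol.2 x₁ hx₁Icc0).2
    have hfrac2 : Γ * L / m' ≤ Γ * p.2 x₁ / m' :=
      div_le_div₀ (by positivity)
        (mul_le_mul_of_nonneg_left (hLe x₁ hx₁Icc) hΓ.le) hm'0 le_rfl
    rw [hum]
    linarith
  have := slope_left_nonpos hder hx₁gt hsubIoo
    (fun z hz => by rw [hum]; exact hbefore z hz)
  linarith

/-- Uniform local existence: from any starting point in the region
`{a ≤ u ≤ B, b ≤ e, |e| ≤ B}`, a solution exists forward for a uniform time `η`,
staying within `min a b / 4` of the start. -/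
lemma pl_step (Γ α ν u₀ : ℝ) (c : ℝ × ℝ) (hΓ : 0 < Γ) {a b B : ℝ}
    (ha : 0 < a) (hb : 0 < b) (hB : 0 < B) :
    ∃ η > (0:ℝ), ∀ (x' : ℝ) (pt : ℝ × ℝ), a ≤ pt.1 → pt.1 ≤ B → b ≤ pt.2 → |pt.2| ≤ B →
      ∃ f : ℝ → ℝ × ℝ, f x' = pt ∧
        (∀ t ∈ Set.Icc x' (x' + η),
          HasDerivWithinAt f (Fvec Γ α ν u₀ c (f t)) (Set.Icc x' (x' + η)) t) ∧
        (∀ t ∈ Set.Icc x' (x' + η), dist (f t) pt ≤ min a b / 4) := by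
  set R : ℝ := min a b / 2 with hR
  have hR0 : 0 < R := by rw [hR]; have := lt_min ha hb; rcases le_total a b with h|h <;>
    simp [min_def, h] <;> linarith
  obtain ⟨C, hC0, hCb⟩ := F_bdd Γ α ν u₀ c (m := a / 2) (B := B + R) hΓ (by linarith) (by linarith)
  obtain ⟨K, hK⟩ := F_lip Γ α ν u₀ c (m := a / 2) (B := B + R) hΓ (by linarith) (by linarith)
  set η : ℝ := R / (4 * C) with hη
  have hη0 : 0 < η := by rw [hη]; positivity
  refine ⟨η, hη0, ?_⟩
  intro x' pt h1 h2 h3 h4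
  have hRa : R ≤ a / 2 := by rw [hR]; have := min_le_left a b; linarith
  have hRb : R ≤ b / 2 := by rw [hR]; have := min_le_right a b; linarith
  have hball : Metric.closedBall pt R ⊆ Reg (a / 2) (B + R) := by
    intro q hq
    rw [Metric.mem_closedBall, Prod.dist_eq] at hq
    have hq1 : |q.1 - pt.1| ≤ R := by
      rw [← Real.dist_eq]; exact le_trans (le_max_left _ _) hq
    have hq2 : |q.2 - pt.2| ≤ R := by
      rw [← Real.dist_eq]; exact le_trans (le_max_right _ _) hq
    have hq1' := abs_le.1 hq1
    have hq2' := abs_le.1 hq2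
    have h4' := abs_le.1 h4
    refine ⟨by linarith [hq1'.1], by linarith [hq1'.2], abs_le.2 ⟨by linarith [hq2'.1, h4'.1], by linarith [hq2'.2, h4'.2]⟩⟩
  have hpl : IsPicardLindelof (fun _ : ℝ => Fvec Γ α ν u₀ c) (tmin := x') (tmax := x' + η)
      ⟨x', ⟨le_refl x', by linarith⟩⟩ pt (Real.toNNReal R) 0 (Real.toNNReal C) K := by
    constructor
    · intro t _; rw [Real.coe_toNNReal _ hR0.le]; exact hK.mono hball
    · intro x _; exact continuousOn_const
    · intro t _ x hx
      rw [Real.coe_toNNReal _ hR0.le] at hx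
      rw [Real.coe_toNNReal _ hC0.le]; exact hCb x (hball hx)
    · show (Real.toNNReal C : ℝ) * max (x' + η - x') (x' - x') ≤ (Real.toNNReal R : ℝ) - ((0:ℝ≥0):ℝ)
      rw [Real.coe_toNNReal _ hR0.le, Real.coe_toNNReal _ hC0.le, NNReal.coe_zero, sub_zero]
      rw [show x' + η - x' = η by ring, show x' - x' = (0:ℝ) by ring,
        max_eq_left hη0.le]
      have hCη : C * η = R / 4 := by rw [hη]; field_simp
      linarith
  obtain ⟨f, hf0, hfd⟩ := hpl.exists_eq_forall_mem_Icc_hasDerivWithinAt₀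
  replace hf0 : f x' = pt := hf0
  have hfc : ContinuousOn f (Set.Icc x' (x' + η)) := fun t ht => (hfd t ht).continuousWithinAt
  -- f stays in the ball of radius R/2
  have hstay : ∀ t ∈ Set.Icc x' (x' + η), dist (f t) pt ≤ R / 2 := by
    by_contra hcon
    push_neg at hcon
    obtain ⟨tb, htb, htb2⟩ := hcon
    set S' : Set ℝ := Set.Icc x' (x' + η) ∩ (fun t => dist (f t) pt) ⁻¹' Set.Ici (R / 2) with hS'
    have hclosed : IsClosed S' :=
      ContinuousOn.preimage_isClosed_of_isClosed
        (continuous_dist.comp_continuousOn (hfc.prodMk continuousOn_const)) isClosed_Icc isClosed_Ici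
    have hSne : S'.Nonempty := ⟨tb, htb, htb2.le⟩
    have hbdd : BddBelow S' := BddBelow.mono (fun x hx => hx.1) (bddBelow_Icc (a := x' + η) (b := x'))
    set T : ℝ := sInf S' with hT
    have hTS : T ∈ S' := hclosed.csInf_mem hSne hbdd
    have hTIcc : T ∈ Set.Icc x' (x' + η) := hTS.1
    have hTgt : x' < T := by
      rcases lt_or_eq_of_le hTIcc.1 with h | h
      · exact h
      · exfalso
        have : dist (f T) pt = 0 := by rw [← h, hf0, dist_self]
        have := hTS.2
        simp only [Set.mem_preimage, Set.mem_Ici] at this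
        rw [‹dist (f T) pt = 0›] at this  -- R/2 ≤ 0 contradiction
        linarith
    have hbefore : ∀ z ∈ Set.Ioo x' T, dist (f z) pt < R / 2 := by
      intro z hz
      have hznot : z ∉ S' := fun hmem => absurd (csInf_le hbdd hmem) (not_le.2 hz.2)
      have hzIcc : z ∈ Set.Icc x' (x' + η) := ⟨hz.1.le, hz.2.le.trans hTIcc.2⟩
      by_contra hh
      exact hznot ⟨hzIcc, not_lt.1 hh⟩
    have hsubIoo : Set.Ioo x' T ⊆ Set.Icc x' (x' + η) :=
      fun z hz => ⟨hz.1.le, hz.2.le.trans hTIcc.2⟩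
    have hcw : ContinuousWithinAt (fun z => dist (f z) pt) (Set.Icc x' (x' + η)) T :=
      (continuous_dist.comp_continuousOn (hfc.prodMk continuousOn_const)) T hTIcc
    have hTle : dist (f T) pt ≤ R / 2 :=
      left_lim_le (f := fun z => dist (f z) pt) hTgt hsubIoo hcw hbefore
    -- all points of Icc x' T are in the closed ball of radius R
    have hin : ∀ t ∈ Set.Icc x' T, f t ∈ Metric.closedBall pt R := by
      intro t ht
      rcases lt_or_eq_of_le ht.2 with h | h
      · rcases lt_or_eq_of_le ht.1 with h' | h'
        · exact Metric.mem_closedBall.2 (le_trans (hbefore t ⟨h', h⟩).le (by linarith))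
        · rw [← h', hf0]; exact Metric.mem_closedBall_self hR0.le
      · rw [h]; exact Metric.mem_closedBall.2 (by linarith)
    -- mean value inequality
    have hmvt : ‖f T - f x'‖ ≤ C * ‖T - x'‖ := by
      apply Convex.norm_image_sub_le_of_norm_hasDerivWithin_le
        (f' := fun t => Fvec Γ α ν u₀ c (f t)) ?_ ?_ (convex_Icc x' T)
        (Set.left_mem_Icc.2 hTIcc.1) (Set.right_mem_Icc.2 hTIcc.1)
      · intro t ht
        exact (hfd t ⟨ht.1, le_trans ht.2 hTIcc.2⟩).mono
          (Set.Icc_subset_Icc_right hTIcc.2)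
      · intro t ht
        exact hCb _ (hball (hin t ht))
    have hTdist : dist (f T) pt = ‖f T - f x'‖ := by rw [hf0, dist_eq_norm]
    have h5 : ‖T - x'‖ ≤ η := by
      rw [Real.norm_eq_abs, abs_of_nonneg (by linarith : (0:ℝ) ≤ T - x')]
      linarith [hTIcc.2]
    have h6 : C * ‖T - x'‖ ≤ C * η := mul_le_mul_of_nonneg_left h5 hC0.le
    have h7 : C * η = R / 4 := by
      rw [hη]; field_simp
    have h8 : R / 2 ≤ dist (f T) pt := hTS.2
    rw [hTdist] at h8
    linarith
  refine ⟨f, hf0, hfd, fun t ht => le_trans (hstay t ht) ?_⟩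
  rw [hR]; linarith

lemma hasDerivWithinAt_fst {f : ℝ → ℝ × ℝ} {d : ℝ × ℝ} {s : Set ℝ} {x : ℝ}
    (h : HasDerivWithinAt f d s x) : HasDerivWithinAt (fun t => (f t).1) d.1 s x := by
  have h2 := h.hasFDerivWithinAt.fst
  have := h2.hasDerivWithinAt
  simpa using this

lemma hasDerivWithinAt_snd {f : ℝ → ℝ × ℝ} {d : ℝ × ℝ} {s : Set ℝ} {x : ℝ}
    (h : HasDerivWithinAt f d s x) : HasDerivWithinAt (fun t => (f t).2) d.2 s x := by
  have h2 := h.hasFDerivWithinAt.snd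
  have := h2.hasDerivWithinAt
  simpa using this

variable {Γ α ν u₀ e₀ : ℝ} {c : ℝ × ℝ} {y : ℝ} {p : (ℝ → ℝ) × (ℝ → ℝ)}

/-- Gluing a good solution on `[0,y]` with a local solution on `[y, y+η]`. -/
lemma glue (hy : 0 < y) (hsol : GoodSol Γ α ν u₀ e₀ c y p) {η : ℝ} (hη : 0 < η)
    (f : ℝ → ℝ × ℝ) (hf0 : f y = (p.1 y, p.2 y))
    (hfd : ∀ t ∈ Set.Icc y (y + η),
      HasDerivWithinAt f (Fvec Γ α ν u₀ c (f t)) (Set.Icc y (y + η)) t)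
    (hfpos : ∀ t ∈ Set.Icc y (y + η), 0 < (f t).1 ∧ 0 < (f t).2) :
    GoodSol Γ α ν u₀ e₀ c (y + η)
      (fun t => if t ≤ y then p.1 t else (f t).1, fun t => if t ≤ y then p.2 t else (f t).2) := by
  set q1 : ℝ → ℝ := fun t => if t ≤ y then p.1 t else (f t).1 with hq1
  set q2 : ℝ → ℝ := fun t => if t ≤ y then p.2 t else (f t).2 with hq2
  have hq1eqp : ∀ t ∈ Set.Icc (0:ℝ) y, q1 t = p.1 t := fun t ht => if_pos ht.2
  have hq2eqp : ∀ t ∈ Set.Icc (0:ℝ) y, q2 t = p.2 t := fun t ht => if_pos ht.2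
  have hq1eqf : ∀ t ∈ Set.Icc y (y + η), q1 t = (f t).1 := by
    intro t ht
    rcases lt_or_eq_of_le ht.1 with h | h
    · exact if_neg (not_le.2 h)
    · rw [hq1]; simp only [← h, le_refl, if_pos, hf0]
  have hq2eqf : ∀ t ∈ Set.Icc y (y + η), q2 t = (f t).2 := by
    intro t ht
    rcases lt_or_eq_of_le ht.1 with h | h
    · exact if_neg (not_le.2 h)
    · rw [hq2]; simp only [← h, le_refl, if_pos, hf0]
  have hyIcc : y ∈ Set.Icc (0:ℝ) y := ⟨hy.le, le_refl y⟩
  have hpos : ∀ x ∈ Set.Icc (0:ℝ) (y + η), 0 < q1 x ∧ 0 < q2 x := by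
    intro x hx
    by_cases h : x ≤ y
    · have hxI : x ∈ Set.Icc (0:ℝ) y := ⟨hx.1, h⟩
      rw [hq1eqp x hxI, hq2eqp x hxI]; exact hsol.2 x hxI
    · have hxI : x ∈ Set.Icc y (y + η) := ⟨(not_le.1 h).le, hx.2⟩
      rw [hq1eqf x hxI, hq2eqf x hxI]; exact hfpos x hxI
  have hunion : Set.Icc (0:ℝ) y ∪ Set.Icc y (y + η) = Set.Icc (0:ℝ) (y + η) :=
    Set.Icc_union_Icc_eq_Icc hy.le (by linarith)
  refine ⟨⟨?_, ?_, ?_⟩, hpos⟩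
  · show q1 0 = u₀
    rw [show q1 0 = p.1 0 from hq1eqp 0 ⟨le_refl 0, hy.le⟩]; exact hsol.1.1
  · show q2 0 = e₀
    rw [show q2 0 = p.2 0 from hq2eqp 0 ⟨le_refl 0, hy.le⟩]; exact hsol.1.2.1
  intro x hx
  by_cases hxy : x < y
  · -- strictly left of y
    have hxI : x ∈ Set.Icc (0:ℝ) y := ⟨hx.1, hxy.le⟩
    have hd := hsol.1.2.2 x hxI
    have hmem : Set.Icc (0:ℝ) y ∈ nhdsWithin x (Set.Icc 0 (y + η)) := by
      rw [mem_nhdsWithin]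
      exact ⟨Set.Iio y, isOpen_Iio, hxy, fun z hz => ⟨hz.2.1, hz.1.le⟩⟩
    have hval1 : q1 x = p.1 x := hq1eqp x hxI
    have hval2 : q2 x = p.2 x := hq2eqp x hxI
    constructor
    · show HasDerivWithinAt q1 ((u₀ / α) * (c.1 + q1 x + Γ * q2 x / q1 x)) (Set.Icc 0 (y + η)) x
      have := (hd.1.congr hq1eqp hval1).mono_of_mem_nhdsWithin hmem
      rw [hval1, hval2]; exact this
    · show HasDerivWithinAt q2 ((u₀ / ν) * (c.2 - c.1 * q1 x - (q1 x) ^ 2 / 2 + q2 x)) (Set.Icc 0 (y + η)) x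
      have := (hd.2.congr hq2eqp hval2).mono_of_mem_nhdsWithin hmem
      rw [hval1, hval2]; exact this
  by_cases hxy2 : x = y
  · -- at the seam
    subst hxy2
    have hdL := hsol.1.2.2 x hyIcc
    have hdR := hfd x ⟨le_refl x, by linarith⟩
    have hval1 : q1 x = p.1 x := hq1eqp x hyIcc
    have hval2 : q2 x = p.2 x := hq2eqp x hyIcc
    have hfx : f x = (p.1 x, p.2 x) := hf0
    constructor
    · show HasDerivWithinAt q1 ((u₀ / α) * (c.1 + q1 x + Γ * q2 x / q1 x)) (Set.Icc 0 (x + η)) x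
      have hL : HasDerivWithinAt q1 ((u₀ / α) * (c.1 + p.1 x + Γ * p.2 x / p.1 x))
          (Set.Icc 0 x) x := hdL.1.congr hq1eqp hval1
      have hR0 := hasDerivWithinAt_fst hdR
      have hvalF : (Fvec Γ α ν u₀ c (f x)).1 = (u₀ / α) * (c.1 + p.1 x + Γ * p.2 x / p.1 x) := by
        rw [hfx]; rfl
      have hR : HasDerivWithinAt q1 ((u₀ / α) * (c.1 + p.1 x + Γ * p.2 x / p.1 x))
          (Set.Icc x (x + η)) x := by
        rw [← hvalF]
        exact hR0.congr hq1eqf (by rw [hq1eqf x ⟨le_refl x, by linarith⟩])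
      have := hL.union hR
      rw [hunion] at this
      rw [hval1, hval2]; exact this
    · show HasDerivWithinAt q2 ((u₀ / ν) * (c.2 - c.1 * q1 x - (q1 x) ^ 2 / 2 + q2 x)) (Set.Icc 0 (x + η)) x
      have hL : HasDerivWithinAt q2 ((u₀ / ν) * (c.2 - c.1 * p.1 x - (p.1 x) ^ 2 / 2 + p.2 x))
          (Set.Icc 0 x) x := hdL.2.congr hq2eqp hval2
      have hR0 := hasDerivWithinAt_snd hdR
      have hvalF : (Fvec Γ α ν u₀ c (f x)).2
          = (u₀ / ν) * (c.2 - c.1 * p.1 x - (p.1 x) ^ 2 / 2 + p.2 x) := by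
        rw [hfx]; rfl
      have hR : HasDerivWithinAt q2 ((u₀ / ν) * (c.2 - c.1 * p.1 x - (p.1 x) ^ 2 / 2 + p.2 x))
          (Set.Icc x (x + η)) x := by
        rw [← hvalF]
        exact hR0.congr hq2eqf (by rw [hq2eqf x ⟨le_refl x, by linarith⟩])
      have := hL.union hR
      rw [hunion] at this
      rw [hval1, hval2]; exact this
  · -- strictly right of y
    have hxy' : y < x := lt_of_le_of_ne (not_lt.1 hxy) (Ne.symm hxy2)
    have hxI : x ∈ Set.Icc y (y + η) := ⟨hxy'.le, hx.2⟩
    have hdR := hfd x hxI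
    have hmem : Set.Icc y (y + η) ∈ nhdsWithin x (Set.Icc 0 (y + η)) := by
      rw [mem_nhdsWithin]
      exact ⟨Set.Ioi y, isOpen_Ioi, hxy', fun z hz => ⟨hz.1.le, hz.2.2⟩⟩
    have hval1 : q1 x = (f x).1 := hq1eqf x hxI
    have hval2 : q2 x = (f x).2 := hq2eqf x hxI
    constructor
    · show HasDerivWithinAt q1 ((u₀ / α) * (c.1 + q1 x + Γ * q2 x / q1 x)) (Set.Icc 0 (y + η)) x
      have hR0 := (hasDerivWithinAt_fst hdR).congr hq1eqf hval1
      have := hR0.mono_of_mem_nhdsWithin hmem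
      rw [hval1, hval2]
      exact this
    · show HasDerivWithinAt q2 ((u₀ / ν) * (c.2 - c.1 * q1 x - (q1 x) ^ 2 / 2 + q2 x)) (Set.Icc 0 (y + η)) x
      have hR0 := (hasDerivWithinAt_snd hdR).congr hq2eqf hval2
      have := hR0.mono_of_mem_nhdsWithin hmem
      rw [hval1, hval2]
      exact this

/-- Lemma small(iv): if `c₁, c₂ < 0` and a positive solution on `[0,x*]` has both components
at most `δ` at `x*`, then it extends to a positive solution on some `[0, x̃)` with
`x̃ ∈ [x*, x* + ε]` and `e(x) → 0` as `x → x̃⁻`; here `δ` depends only on `c₁, c₂, ε`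
(and the fixed constants). -/
theorem stmt3 (Γ α ν u₀ e₀ : ℝ) (hΓ : 0 < Γ) (hα : 0 < α) (hν : 0 < ν)
    (hu₀ : 0 < u₀) (he₀ : 0 < e₀) (c : ℝ × ℝ) (hc1 : c.1 < 0) (hc2 : c.2 < 0) :
    ∀ ε > (0:ℝ), ∃ δ > (0:ℝ), ∀ xs : ℝ, 0 < xs →
      ∀ u e : ℝ → ℝ,
        IsProfileSol Γ α ν u₀ e₀ c u e (Set.Icc 0 xs) →
        (∀ x ∈ Set.Icc (0:ℝ) xs, 0 < u x ∧ 0 < e x) →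
        u xs ≤ δ → e xs ≤ δ →
        ∃ xt ∈ Set.Icc xs (xs + ε), ∃ U E : ℝ → ℝ,
          IsProfileSol Γ α ν u₀ e₀ c U E (Set.Ico 0 xt) ∧
          (∀ x ∈ Set.Ico (0:ℝ) xt, 0 < U x ∧ 0 < E x) ∧
          (∀ x ∈ Set.Icc (0:ℝ) xs ∩ Set.Ico (0:ℝ) xt, U x = u x ∧ E x = e x) ∧
          Filter.Tendsto E (nhdsWithin xt (Set.Ico 0 xt)) (nhds 0) := by
  intro ε hε
  have ha1 : 0 < u₀ / α := by positivity
  have ha2 : 0 < u₀ / ν := by positivity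
  set C1 : ℝ := -c.1 with hC1
  set C2 : ℝ := -c.2 with hC2
  have hC1p : 0 < C1 := by rw [hC1]; linarith
  have hC2p : 0 < C2 := by rw [hC2]; linarith
  set M : ℝ := min (C1 / 4) (C2 / (4 * C1)) with hM
  have hMp : 0 < M := lt_min (by positivity) (by positivity)
  have hM1 : M ≤ C1 / 4 := min_le_left _ _
  have hM2 : M ≤ C2 / (4 * C1) := min_le_right _ _
  have hM2' : C1 * M ≤ C2 / 4 := by
    have := mul_le_mul_of_nonneg_left hM2 hC1p.le
    calc C1 * M ≤ C1 * (C2 / (4 * C1)) := this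
      _ = C2 / 4 := by field_simp
  set δ' : ℝ := min (min (M / 2) (M * C1 / (2 * Γ))) (C2 / 4) with hδ'
  have hδ'p : 0 < δ' := lt_min (lt_min (by positivity) (by positivity)) (by positivity)
  have hδ'1 : δ' ≤ M / 2 := le_trans (min_le_left _ _) (min_le_left _ _)
  have hδ'2 : δ' ≤ M * C1 / (2 * Γ) := le_trans (min_le_left _ _) (min_le_right _ _)
  have hδ'3 : δ' ≤ C2 / 4 := min_le_right _ _
  -- the two key sign conditions
  have hMc : c.1 + M + Γ * δ' / M < 0 := by
    have h1 : Γ * δ' / M ≤ C1 / 2 := by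
      rw [div_le_iff₀ hMp]
      calc Γ * δ' ≤ Γ * (M * C1 / (2 * Γ)) := mul_le_mul_of_nonneg_left hδ'2 hΓ.le
        _ = C1 / 2 * M := by field_simp
    have : c.1 = -C1 := by rw [hC1]; ring
    rw [this]; linarith
  have hec : c.2 + (-c.1) * M + δ' ≤ -(C2 / 2) := by
    have : c.2 = -C2 := by rw [hC2]; ring
    rw [this, ← hC1]; linarith
  have hec' : c.2 + (-c.1) * M + δ' < 0 := lt_of_le_of_lt hec (by linarith)
  set r : ℝ := u₀ / ν * (C2 / 2) with hr
  have hrp : 0 < r := by rw [hr]; positivity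
  set δ : ℝ := min (δ' / 2) (r * ε / 2) with hδ
  have hδp : 0 < δ := lt_min (by positivity) (by positivity)
  have hδ1 : δ ≤ δ' / 2 := min_le_left _ _
  have hδ2 : δ ≤ r * ε / 2 := min_le_right _ _
  refine ⟨δ, hδp, ?_⟩
  intro xs hxs u e husol hupos hu he
  have hGood : GoodSol Γ α ν u₀ e₀ c xs (u, e) := ⟨husol, hupos⟩
  -- the set of extension times
  set A : Set ℝ := {y : ℝ | xs ≤ y ∧ ∃ p, GoodSol Γ α ν u₀ e₀ c y p} with hA
  have hxsA : xs ∈ A := ⟨le_refl xs, (u, e), hGood⟩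
  have hAne : A.Nonempty := ⟨xs, hxsA⟩
  -- agreement of any two good solutions
  have agree : ∀ (y₁ y₂ : ℝ) (p₁ p₂ : (ℝ → ℝ) × (ℝ → ℝ)),
      GoodSol Γ α ν u₀ e₀ c y₁ p₁ → GoodSol Γ α ν u₀ e₀ c y₂ p₂ →
      ∀ x, x ∈ Set.Icc (0:ℝ) y₁ → x ∈ Set.Icc (0:ℝ) y₂ →
      p₁.1 x = p₂.1 x ∧ p₁.2 x = p₂.2 x := by
    intro y₁ y₂ p₁ p₂ h₁ h₂ x hx₁ hx₂
    rcases le_total y₁ y₂ with h | h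
    · exact GoodSol.unique hΓ (le_trans hx₁.1 hx₁.2) h₁
        (h₂.mono (le_trans hx₁.1 hx₁.2) h) x hx₁
    · have := GoodSol.unique hΓ (le_trans hx₂.1 hx₂.2) h₂
        (h₁.mono (le_trans hx₂.1 hx₂.2) h) x hx₂
      exact ⟨this.1.symm, this.2.symm⟩
  -- basic facts about any witness
  have hWxs : ∀ (y : ℝ) (p : (ℝ → ℝ) × (ℝ → ℝ)), GoodSol Γ α ν u₀ e₀ c y p → xs ≤ y →
      p.1 xs = u xs ∧ p.2 xs = e xs := by
    intro y p hp hy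
    exact agree y xs p (u, e) hp hGood xs ⟨hxs.le, hy⟩ ⟨hxs.le, le_refl xs⟩
  have hδM : δ < M := by
    have : δ' ≤ M / 2 := hδ'1
    linarith
  have hδδ' : δ < δ' := by linarith
  -- region bounds for witnesses
  have hreg : ∀ (y : ℝ) (p : (ℝ → ℝ) × (ℝ → ℝ)), GoodSol Γ α ν u₀ e₀ c y p → xs ≤ y →
      ∀ x ∈ Set.Icc xs y, p.1 x < M ∧ p.2 x < δ' := by
    intro y p hp hy
    obtain ⟨h1, h2⟩ := hWxs y p hp hy
    exact inv1 hΓ ha1 ha2 hc1 hMp hδ'p hMc hec' hp ⟨hxs.le, hy⟩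
      (by rw [h1]; linarith) (by rw [h2]; linarith)
  -- decay of the second component
  have hdecay : ∀ (y : ℝ) (p : (ℝ → ℝ) × (ℝ → ℝ)), GoodSol Γ α ν u₀ e₀ c y p → xs ≤ y →
      ∀ x₁ ∈ Set.Icc xs y, ∀ x₂ ∈ Set.Icc xs y, x₁ ≤ x₂ →
        p.2 x₂ ≤ p.2 x₁ - r * (x₂ - x₁) := by
    intro y p hp hy
    have := inv2 (e₀ := e₀) ha2 hc1 (by positivity : (0:ℝ) < C2 / 2) hec hp ⟨hxs.le, hy⟩ hxs
      (fun x hx => ⟨(hreg y p hp hy x hx).1.le, (hreg y p hp hy x hx).2.le⟩)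
    rw [hr]
    exact this
  -- any extension time is at most xs + ε/2
  have hbound : ∀ y ∈ A, y ≤ xs + ε / 2 := by
    intro y hy
    obtain ⟨hy1, p, hp⟩ := hy
    have hd := hdecay y p hp hy1 xs ⟨le_refl xs, hy1⟩ y ⟨hy1, le_refl y⟩ hy1
    have hpy : 0 < p.2 y := (hp.2 y ⟨le_trans hxs.le hy1, le_refl y⟩).2
    have hpxs : p.2 xs = e xs := (hWxs y p hp hy1).2
    rw [hpxs] at hd
    -- 0 < e xs - r (y - xs) ⇒ y ≤ xs + δ/r ≤ xs + ε/2
    have h5 : r * (y - xs) < δ := by linarith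
    have h6 : y - xs < δ / r := by
      rw [lt_div_iff₀ hrp]; linarith [mul_comm r (y - xs)]
    have h7 : δ / r ≤ ε / 2 := by
      rw [div_le_iff₀ hrp]
      calc δ ≤ r * ε / 2 := hδ2
        _ = ε / 2 * r := by ring
    linarith
  have hbddA : BddAbove A := ⟨xs + ε / 2, hbound⟩
  set xt : ℝ := sSup A with hxt
  have hxt1 : xs ≤ xt := le_csSup hbddA hxsA
  have hxt2 : xt ≤ xs + ε / 2 := csSup_le hAne hbound
  -- A is downward closed above xs
  have hA_dc : ∀ y z : ℝ, y ∈ A → xs ≤ z → z ≤ y → z ∈ A := by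
    intro y z hy hz1 hz2
    obtain ⟨_, p, hp⟩ := hy
    exact ⟨hz1, p, hp.mono (le_trans hxs.le hz1) hz2⟩
  have hmemA : ∀ z : ℝ, xs ≤ z → z < xt → z ∈ A := by
    intro z h1 h2
    obtain ⟨y', hy', hlt⟩ := exists_lt_of_lt_csSup hAne h2
    exact hA_dc y' z hy' h1 hlt.le
  -- uniform extension step
  have hext : ∀ a b : ℝ, 0 < a → 0 < b → ∃ η > (0:ℝ), ∀ y ∈ A,
      ∀ p : (ℝ → ℝ) × (ℝ → ℝ), GoodSol Γ α ν u₀ e₀ c y p →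
      a ≤ p.1 y → b ≤ p.2 y → (y + η) ∈ A := by
    intro a b ha hb
    obtain ⟨η, hη, hstep⟩ := pl_step Γ α ν u₀ c hΓ (B := M + δ') ha hb (by positivity)
    refine ⟨η, hη, ?_⟩
    intro y hy p hp hpa hpb
    have hy1 : xs ≤ y := hy.1
    have hy0 : 0 < y := lt_of_lt_of_le hxs hy1
    have hyIcc : y ∈ Set.Icc xs y := ⟨hy1, le_refl y⟩
    have hb1 := hreg y p hp hy1 y hyIcc
    have hpy2 : 0 < p.2 y := (hp.2 y ⟨hy0.le, le_refl y⟩).2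
    obtain ⟨f, hf0, hfd, hfstay⟩ := hstep y (p.1 y, p.2 y) hpa (by
        show p.1 y ≤ M + δ'; linarith [hb1.1]) hpb (by
        show |p.2 y| ≤ M + δ'
        rw [abs_of_pos hpy2]; linarith [hb1.2])
    have hfpos : ∀ t ∈ Set.Icc y (y + η), 0 < (f t).1 ∧ 0 < (f t).2 := by
      intro t ht
      have hd := hfstay t ht
      have hd1 : |(f t).1 - p.1 y| ≤ min a b / 4 := by
        refine le_trans ?_ hd
        rw [Prod.dist_eq, ← Real.dist_eq]
        exact le_max_left _ _
      have hd2 : |(f t).2 - p.2 y| ≤ min a b / 4 := by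
        refine le_trans ?_ hd
        rw [Prod.dist_eq, ← Real.dist_eq]
        exact le_max_right _ _
      have hmin1 : min a b ≤ a := min_le_left _ _
      have hmin2 : min a b ≤ b := min_le_right _ _
      have := abs_le.1 hd1
      have := abs_le.1 hd2
      constructor
      · have : -(min a b / 4) ≤ (f t).1 - p.1 y := (abs_le.1 hd1).1
        linarith
      · have : -(min a b / 4) ≤ (f t).2 - p.2 y := (abs_le.1 hd2).1
        linarith
    have hglue := glue hy0 hp hη f hf0 hfd hfpos
    exact ⟨by linarith, _, hglue⟩
  -- xt is strictly bigger than xs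
  have huexs : 0 < u xs := (hupos xs ⟨hxs.le, le_refl xs⟩).1
  have heexs : 0 < e xs := (hupos xs ⟨hxs.le, le_refl xs⟩).2
  have hxtgt : xs < xt := by
    obtain ⟨η₀, hη₀, hstep⟩ := hext (u xs) (e xs) huexs heexs
    have := hstep xs hxsA (u, e) hGood (le_refl _) (le_refl _)
    have := le_csSup hbddA this
    linarith
  have hxt0 : 0 < xt := lt_trans hxs hxtgt
  -- choice of a strictly later witness for each x < xt
  have hch : ∀ x : ℝ, ∃ y : ℝ, ∃ p : (ℝ → ℝ) × (ℝ → ℝ), GoodSol Γ α ν u₀ e₀ c y p ∧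
      (x < xt → xs ≤ y ∧ x < y ∧ y < xt) := by
    intro x
    by_cases h : x < xt
    · set z : ℝ := (max x xs + xt) / 2 with hz
      have h1 : max x xs < xt := max_lt h hxtgt
      have h2 : max x xs < z := by rw [hz]; linarith
      have h3 : z < xt := by rw [hz]; linarith
      have h4 : xs ≤ z := le_trans (le_max_right _ _) h2.le
      obtain ⟨_, p, hp⟩ := hmemA z h4 h3
      exact ⟨z, p, hp, fun _ => ⟨h4, lt_of_le_of_lt (le_max_left _ _) h2, h3⟩⟩
    · exact ⟨xs, (u, e), hGood, fun hc => absurd hc h⟩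
  choose Y PS hPS hY using hch
  -- the glued maximal solution
  set U : ℝ → ℝ := fun x => (PS x).1 x with hU
  set E : ℝ → ℝ := fun x => (PS x).2 x with hE
  have hagree : ∀ (x y : ℝ) (pp : (ℝ → ℝ) × (ℝ → ℝ)), GoodSol Γ α ν u₀ e₀ c y pp →
      0 ≤ x → x ≤ y → x < xt → U x = pp.1 x ∧ E x = pp.2 x := by
    intro x y pp hpp h0 hxy hxt'
    have h1 := hY x hxt'
    exact agree (Y x) y (PS x) pp (hPS x) hpp x ⟨h0, h1.2.1.le⟩ ⟨h0, hxy⟩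
  have hposUE : ∀ x ∈ Set.Ico (0:ℝ) xt, 0 < U x ∧ 0 < E x := by
    intro x hx
    exact (hPS x).2 x ⟨hx.1, (hY x hx.2).2.1.le⟩
  -- derivative of the glued solution
  have hderUE : ∀ x ∈ Set.Ico (0:ℝ) xt,
      HasDerivWithinAt U ((u₀ / α) * (c.1 + U x + Γ * E x / U x)) (Set.Ico 0 xt) x ∧
      HasDerivWithinAt E ((u₀ / ν) * (c.2 - c.1 * U x - (U x) ^ 2 / 2 + E x)) (Set.Ico 0 xt) x := by
    intro x hx
    obtain ⟨hy1, hy2, hy3⟩ := hY x hx.2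
    have hxIcc : x ∈ Set.Icc (0:ℝ) (Y x) := ⟨hx.1, hy2.le⟩
    have hEqOn1 : ∀ z ∈ Set.Icc (0:ℝ) (Y x), U z = (PS x).1 z := by
      intro z hz
      exact (hagree z (Y x) (PS x) (hPS x) hz.1 hz.2 (lt_of_le_of_lt hz.2 hy3)).1
    have hEqOn2 : ∀ z ∈ Set.Icc (0:ℝ) (Y x), E z = (PS x).2 z := by
      intro z hz
      exact (hagree z (Y x) (PS x) (hPS x) hz.1 hz.2 (lt_of_le_of_lt hz.2 hy3)).2
    have hd := (hPS x).1.2.2 x hxIcc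
    have hmem : Set.Icc (0:ℝ) (Y x) ∈ nhdsWithin x (Set.Ico 0 xt) := by
      rw [mem_nhdsWithin]
      exact ⟨Set.Iio (Y x), isOpen_Iio, hy2, fun z hz => ⟨hz.2.1, hz.1.le⟩⟩
    constructor
    · exact ((hd.1.congr hEqOn1 (hEqOn1 x hxIcc)).mono_of_mem_nhdsWithin hmem)
    · exact ((hd.2.congr hEqOn2 (hEqOn2 x hxIcc)).mono_of_mem_nhdsWithin hmem)
  -- E decays on [xs, xt)
  have hEdec : ∀ x₁ ∈ Set.Ico xs xt, ∀ x₂ ∈ Set.Ico xs xt, x₁ ≤ x₂ →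
      E x₂ ≤ E x₁ - r * (x₂ - x₁) := by
    intro x₁ hx₁ x₂ hx₂ h12
    obtain ⟨hy1, hy2, hy3⟩ := hY x₂ hx₂.2
    have h0 : 0 ≤ x₁ := le_trans hxs.le hx₁.1
    have hE1 : E x₁ = (PS x₂).2 x₁ :=
      (hagree x₁ (Y x₂) (PS x₂) (hPS x₂) h0 (le_trans h12 hy2.le) hx₁.2).2
    have hE2 : E x₂ = (PS x₂).2 x₂ := rfl
    rw [hE1, hE2]
    exact hdecay (Y x₂) (PS x₂) (hPS x₂) hy1 x₁ ⟨hx₁.1, le_trans h12 hy2.le⟩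
      x₂ ⟨hx₂.1, hy2.le⟩ h12
  -- infimum of E on [xs, xt) is 0
  have hinf : ∀ m : ℝ, 0 < m → ∃ x ∈ Set.Ico xs xt, E x < m := by
    intro m hm
    by_contra hcon
    push_neg at hcon
    -- E ≥ m on [xs, xt); get a lower bound on U
    set m' : ℝ := min (u xs) (Γ * m / (2 * (-c.1))) / 2 with hm'
    have hm'0 : 0 < m' := by
      rw [hm']
      have h1 : 0 < Γ * m / (2 * (-c.1)) := by
        apply div_pos (by positivity); rw [← hC1]; positivity
      have := lt_min huexs h1
      linarith
    have hUlow : ∀ x ∈ Set.Ico xs xt, m' < U x := by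
      intro x hx
      obtain ⟨hy1, hy2, hy3⟩ := hY x hx.2
      have hLe : ∀ z ∈ Set.Icc xs (Y x), m ≤ (PS x).2 z := by
        intro z hz
        have hz' : z < xt := lt_of_le_of_lt hz.2 hy3
        have hE : E z = (PS x).2 z :=
          (hagree z (Y x) (PS x) (hPS x) (le_trans hxs.le hz.1) hz.2 hz').2
        rw [← hE]
        exact hcon z ⟨hz.1, hz'⟩
      have h3 := inv3 (e₀ := e₀) hΓ ha1 hc1 hm (hPS x) ⟨hxs.le, hy1⟩ hLe x ⟨hx.1, hy2.le⟩
      have hpxs : (PS x).1 xs = u xs := (hWxs (Y x) (PS x) (hPS x) hy1).1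
      rw [hpxs] at h3
      have hUx : U x = (PS x).1 x := rfl
      rw [hUx]
      rw [hm']
      exact h3
    -- now extend beyond xt, contradiction
    obtain ⟨η', hη', hstep⟩ := hext m' m hm'0 hm
    set y : ℝ := max xs (xt - η' / 2) with hy
    have hy1 : xs ≤ y := le_max_left _ _
    have hy2 : y < xt := max_lt hxtgt (by linarith)
    obtain ⟨_, pp, hpp⟩ := hmemA y hy1 hy2
    have h0y : 0 ≤ y := le_trans hxs.le hy1
    have hUy : U y = pp.1 y := (hagree y y pp hpp h0y (le_refl y) hy2).1
    have hEy : E y = pp.2 y := (hagree y y pp hpp h0y (le_refl y) hy2).2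
    have hAA := hstep y (hmemA y hy1 hy2) pp hpp
      (by rw [← hUy]; exact (hUlow y ⟨hy1, hy2⟩).le)
      (by rw [← hEy]; exact hcon y ⟨hy1, hy2⟩)
    have := le_csSup hbddA hAA
    have hy3 : xt - η' / 2 ≤ y := le_max_right _ _
    linarith
  -- the tendsto statement
  have htend : Filter.Tendsto E (nhdsWithin xt (Set.Ico 0 xt)) (nhds 0) := by
    rw [NormedAddCommGroup.tendsto_nhds_zero]
    intro m hm
    obtain ⟨x₀, hx₀, hx₀m⟩ := hinf m hm
    have hIoi : Set.Ioi x₀ ∈ nhdsWithin xt (Set.Ico 0 xt) :=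
      nhdsWithin_le_nhds (Ioi_mem_nhds hx₀.2)
    filter_upwards [hIoi, self_mem_nhdsWithin] with x h1 h2
    have h1' : x₀ < x := h1
    have hx1 : xs ≤ x := le_trans hx₀.1 (le_of_lt h1')
    have hdec := hEdec x₀ hx₀ x ⟨hx1, h2.2⟩ (le_of_lt h1')
    have hpos := (hposUE x h2).2
    rw [Real.norm_eq_abs, abs_of_pos hpos]
    have : 0 ≤ r * (x - x₀) := by
      apply mul_nonneg hrp.le
      linarith
    linarith
  -- final assembly
  refine ⟨xt, ⟨hxt1, by linarith⟩, U, E, ⟨?_, ?_, fun x hx => hderUE x hx⟩, hposUE, ?_, htend⟩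
  · -- U 0 = u₀
    have := (hagree 0 xs (u, e) hGood (le_refl 0) hxs.le hxt0).1
    rw [this]
    exact husol.1
  · have := (hagree 0 xs (u, e) hGood (le_refl 0) hxs.le hxt0).2
    rw [this]
    exact husol.2.1
  · intro x hx
    obtain ⟨hx1, hx2⟩ := hx
    exact ⟨(hagree x xs (u, e) hGood hx1.1 hx1.2 hx2.2).1,
      (hagree x xs (u, e) hGood hx1.1 hx1.2 hx2.2).2⟩
end
end
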